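/- arXiv:2110.06191 — 4 statements merged into one kernel-verified Lean document; each statement's English description precedes it below -/
import Mathlib

section
/- Fix a graph G, a function f : V(G) → Z⁺, and a vertex v with f(v) > d(v). If G − v is f-swappable, then G is f-swappable. -/
noncomputable section
open scoped Classical

/-- `φ` is a proper `L`-coloring of `G`: every vertex gets a color from its list,
and adjacent vertices get distinct colors. -/
def IsLColoring {V : Type*} (G : SimpleGraph V) (L : V → Finset ℕ) (φ : V → ℕ) : Prop :=
  (∀ v, φ v ∈ L v) ∧ ∀ ⦃u w⦄, G.Adj u w → φ u ≠ φ w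

/-- `KempeChain G φ a b x y` : `y` lies in the `a,b`-component of `x`, i.e. `y` is reachable
from `x` in the subgraph induced by the vertices colored `a` or `b` by `φ`. -/
def KempeChain {V : Type*} (G : SimpleGraph V) (φ : V → ℕ) (a b : ℕ) : V → V → Prop :=
  Relation.ReflTransGen fun u w => G.Adj u w ∧ (φ u = a ∨ φ u = b) ∧ (φ w = a ∨ φ w = b)

/-- The coloring obtained from `φ` by performing an `(a,b)`-Kempe swap on the
`a,b`-component containing `x`. -/
def kempeSwap {V : Type*} (G : SimpleGraph V) (φ : V → ℕ) (a b : ℕ) (x : V) : V → ℕ := fun w =>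
  if KempeChain G φ a b x w then (if φ w = a then b else if φ w = b then a else φ w) else φ w

/-- `ψ` is obtained from `φ` by a single `L`-valid Kempe swap. -/
def KempeStep {V : Type*} (G : SimpleGraph V) (L : V → Finset ℕ) (φ ψ : V → ℕ) : Prop :=
  ∃ a b x, a ≠ b ∧ (φ x = a ∨ φ x = b) ∧ ψ = kempeSwap G φ a b x ∧ IsLColoring G L ψ

/-- Two colorings are `L`-equivalent if one can be transformed into the other by a
sequence of `L`-valid Kempe swaps. -/
def LEquiv {V : Type*} (G : SimpleGraph V) (L : V → Finset ℕ) (φ ψ : V → ℕ) : Prop :=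
  Relation.ReflTransGen (KempeStep G L) φ ψ

/-- `G` is `L`-swappable: every two of its `L`-colorings are `L`-equivalent. -/
def LSwappable {V : Type*} (G : SimpleGraph V) (L : V → Finset ℕ) : Prop :=
  ∀ φ ψ, IsLColoring G L φ → IsLColoring G L ψ → LEquiv G L φ ψ

/-- `G` is `f`-swappable: `G` is `L`-swappable whenever `L` is a list assignment with
`|L(v)| = f(v)` for each vertex `v`. -/
def FSwappable {V : Type*} (G : SimpleGraph V) (f : V → ℕ) : Prop :=
  ∀ L : V → Finset ℕ, (∀ v, (L v).card = f v) → LSwappable G L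

/-- `G` is `f`-choosable: `G` admits an `L`-coloring whenever `L` is a list assignment
with `|L(v)| = f(v)` for each vertex `v`. -/
def FChoosable {V : Type*} (G : SimpleGraph V) (f : V → ℕ) : Prop :=
  ∀ L : V → Finset ℕ, (∀ v, (L v).card = f v) → ∃ φ, IsLColoring G L φ
section AuxLemmas

variable {V : Type*}

lemma kempeSwap_proper (G : SimpleGraph V) (φ : V → ℕ) {a b : ℕ} (hab : a ≠ b) (x : V)
    (hφ : ∀ ⦃u w⦄, G.Adj u w → φ u ≠ φ w) :
    ∀ ⦃u w⦄, G.Adj u w → kempeSwap G φ a b x u ≠ kempeSwap G φ a b x w := by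
  intro u w h huw
  have hne := hφ h
  have hstep : ∀ {p q : V}, G.Adj p q → KempeChain G φ a b x p →
      (φ p = a ∨ φ p = b) → (φ q = a ∨ φ q = b) → KempeChain G φ a b x q :=
    fun hpq hc c1 c2 => hc.tail ⟨hpq, c1, c2⟩
  unfold kempeSwap at huw
  rcases Classical.em (KempeChain G φ a b x u) with hu | hu <;>
    rcases Classical.em (KempeChain G φ a b x w) with hw | hw
  · rw [if_pos hu, if_pos hw] at huw
    split_ifs at huw <;> omega
  · rw [if_pos hu, if_neg hw] at huw
    split_ifs at huw with h1 h2
    · exact hw (hstep h hu (Or.inl h1) (Or.inr huw.symm))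
    · exact hw (hstep h hu (Or.inr h2) (Or.inl huw.symm))
    · exact hne huw
  · rw [if_neg hu, if_pos hw] at huw
    split_ifs at huw with h1 h2
    · exact hu (hstep h.symm hw (Or.inl h1) (Or.inr huw))
    · exact hu (hstep h.symm hw (Or.inr h2) (Or.inl huw))
    · exact hne huw
  · rw [if_neg hu, if_neg hw] at huw; exact hne huw

lemma chain_up {G : SimpleGraph V} {v : V} {Φ : V → ℕ} {a b : ℕ}
    {x y : ({v}ᶜ : Set V)}
    (h : KempeChain (G.induce ({v}ᶜ : Set V)) (fun z => Φ ↑z) a b x y) :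
    KempeChain G Φ a b ↑x ↑y := by
  induction h with
  | refl => exact Relation.ReflTransGen.refl
  | tail _ h2 ih => exact ih.tail ⟨h2.1, h2.2.1, h2.2.2⟩

lemma chain_down {G : SimpleGraph V} {v : V} {Φ : V → ℕ} {a b : ℕ}
    {x : ({v}ᶜ : Set V)} (hnv : ¬ KempeChain G Φ a b ↑x v) {w : V}
    (h : KempeChain G Φ a b ↑x w) :
    ∃ hw : w ∈ ({v}ᶜ : Set V),
      KempeChain (G.induce ({v}ᶜ : Set V)) (fun z => Φ ↑z) a b x ⟨w, hw⟩ := by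
  induction h with
  | refl => exact ⟨x.2, Relation.ReflTransGen.refl⟩
  | @tail p q h1 h2 ih =>
    obtain ⟨hp, hc⟩ := ih
    have hqv : q ≠ v := fun he => hnv (he ▸ h1.tail h2)
    exact ⟨Set.mem_compl_singleton_iff.mpr hqv, hc.tail ⟨h2.1, h2.2.1, h2.2.2⟩⟩

lemma chain_hit {G : SimpleGraph V} {v : V} {Φ : V → ℕ} {a b : ℕ}
    {x : ({v}ᶜ : Set V)} {w : V}
    (h : KempeChain G Φ a b ↑x w) :
    (∃ hw : w ∈ ({v}ᶜ : Set V),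
        KempeChain (G.induce ({v}ᶜ : Set V)) (fun z => Φ ↑z) a b x ⟨w, hw⟩) ∨
    (∃ u, ∃ hu : u ∈ ({v}ᶜ : Set V), G.Adj u v ∧ (Φ u = a ∨ Φ u = b) ∧ (Φ v = a ∨ Φ v = b) ∧
        KempeChain (G.induce ({v}ᶜ : Set V)) (fun z => Φ ↑z) a b x ⟨u, hu⟩) := by
  induction h with
  | refl => exact Or.inl ⟨x.2, Relation.ReflTransGen.refl⟩
  | @tail p q h1 h2 ih =>
    rcases ih with ⟨hp, hc⟩ | hit
    · by_cases hq : q = v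
      · subst hq
        exact Or.inr ⟨p, hp, h2.1, h2.2.1, h2.2.2, hc⟩
      · exact Or.inl ⟨Set.mem_compl_singleton_iff.mpr hq, hc.tail ⟨h2.1, h2.2.1, h2.2.2⟩⟩
    · exact Or.inr hit

lemma chain_all {G : SimpleGraph V} {v : V} {Φ : V → ℕ} {a b : ℕ}
    {x : ({v}ᶜ : Set V)}
    (H : ∀ u, G.Adj v u → (Φ u = a ∨ Φ u = b) →
      ∃ hu : u ∈ ({v}ᶜ : Set V),
        KempeChain (G.induce ({v}ᶜ : Set V)) (fun z => Φ ↑z) a b x ⟨u, hu⟩)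
    {w : V} (h : KempeChain G Φ a b ↑x w) :
    w = v ∨ ∃ hw : w ∈ ({v}ᶜ : Set V),
      KempeChain (G.induce ({v}ᶜ : Set V)) (fun z => Φ ↑z) a b x ⟨w, hw⟩ := by
  induction h with
  | refl => exact Or.inr ⟨x.2, Relation.ReflTransGen.refl⟩
  | @tail p q h1 h2 ih =>
    rcases ih with hp | ⟨hp, hc⟩
    · subst hp
      exact Or.inr (H q h2.1 h2.2.2)
    · by_cases hq : q = v
      · exact Or.inl hq
      · exact Or.inr ⟨Set.mem_compl_singleton_iff.mpr hq, hc.tail ⟨h2.1, h2.2.1, h2.2.2⟩⟩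

lemma recolor_step {G : SimpleGraph V} {L : V → Finset ℕ} {Φ : V → ℕ}
    (hΦ : IsLColoring G L Φ) (v : V) (d : ℕ) (hd : d ∈ L v) (hdv : Φ v ≠ d)
    (hnb : ∀ u, G.Adj v u → Φ u ≠ d) :
    IsLColoring G L (Function.update Φ v d) ∧ KempeStep G L Φ (Function.update Φ v d) := by
  have hchain : ∀ w, KempeChain G Φ (Φ v) d v w → w = v := by
    intro w h
    rcases Relation.ReflTransGen.cases_head h with h' | ⟨u, hu, _⟩
    · exact h'.symm
    · rcases hu.2.2 with h'' | h''
      · exact absurd h''.symm (hΦ.2 hu.1)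
      · exact absurd h'' (hnb _ hu.1)
  have heq : kempeSwap G Φ (Φ v) d v = Function.update Φ v d := by
    funext w
    by_cases hw : w = v
    · rw [hw, Function.update_self]
      have hc : KempeChain G Φ (Φ v) d v v := Relation.ReflTransGen.refl
      unfold kempeSwap
      rw [if_pos hc, if_pos (rfl : Φ v = Φ v)]
    · rw [Function.update_of_ne hw]
      unfold kempeSwap
      rw [if_neg (fun hc => hw (hchain _ hc))]
  have hL : IsLColoring G L (Function.update Φ v d) := by
    constructor
    · intro w
      by_cases hw : w = v
      · subst hw; rw [Function.update_self]; exact hd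
      · rw [Function.update_of_ne hw]; exact hΦ.1 w
    · intro p q h hpq
      by_cases hp : p = v <;> by_cases hq : q = v
      · subst hp; subst hq; exact G.loopless.irrefl _ h
      · subst hp
        rw [Function.update_self, Function.update_of_ne hq] at hpq
        exact hnb q h hpq.symm
      · subst hq
        rw [Function.update_self, Function.update_of_ne hp] at hpq
        exact hnb p h.symm hpq
      · rw [Function.update_of_ne hp, Function.update_of_ne hq] at hpq
        exact hΦ.2 h hpq
  exact ⟨hL, ⟨Φ v, d, v, hdv, Or.inl rfl, heq.symm, hL⟩⟩

lemma liftCore {G : SimpleGraph V} {L : V → Finset ℕ} {v : V} {Φ : V → ℕ} {a b : ℕ}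
    {x : ({v}ᶜ : Set V)}
    (hΦ : IsLColoring G L Φ) (hab : a ≠ b) (hax : Φ ↑x = a ∨ Φ ↑x = b)
    (hτ : IsLColoring (G.induce ({v}ᶜ : Set V)) (fun z => L ↑z)
      (kempeSwap (G.induce ({v}ᶜ : Set V)) (fun z => Φ ↑z) a b x))
    (hiff : ∀ w : ({v}ᶜ : Set V), KempeChain G Φ a b ↑x ↑w ↔
      KempeChain (G.induce ({v}ᶜ : Set V)) (fun z => Φ ↑z) a b x w)
    (hvL : kempeSwap G Φ a b ↑x v ∈ L v) :
    IsLColoring G L (kempeSwap G Φ a b ↑x) ∧ KempeStep G L Φ (kempeSwap G Φ a b ↑x) ∧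
      ∀ w : ({v}ᶜ : Set V),
        kempeSwap G Φ a b ↑x ↑w =
          kempeSwap (G.induce ({v}ᶜ : Set V)) (fun z => Φ ↑z) a b x w := by
  have hval : ∀ w : ({v}ᶜ : Set V),
      kempeSwap G Φ a b ↑x ↑w =
        kempeSwap (G.induce ({v}ᶜ : Set V)) (fun z => Φ ↑z) a b x w := by
    intro w
    by_cases hc : KempeChain (G.induce ({v}ᶜ : Set V)) (fun z => Φ ↑z) a b x w
    · unfold kempeSwap; rw [if_pos ((hiff w).mpr hc), if_pos hc]
    · unfold kempeSwap; rw [if_neg (fun h => hc ((hiff w).mp h)), if_neg hc]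
  have hL : IsLColoring G L (kempeSwap G Φ a b ↑x) := by
    refine ⟨fun w => ?_, kempeSwap_proper G Φ hab ↑x hΦ.2⟩
    by_cases hw : w = v
    · subst hw; exact hvL
    · have hmem : w ∈ ({v}ᶜ : Set V) := Set.mem_compl_singleton_iff.mpr hw
      rw [show w = ((⟨w, hmem⟩ : ({v}ᶜ : Set V)) : V) from rfl, hval ⟨w, hmem⟩]
      exact hτ.1 ⟨w, hmem⟩
  exact ⟨hL, ⟨a, b, ↑x, hab, hax, rfl, hL⟩, hval⟩

lemma lift_step [Fintype V] {G : SimpleGraph V} {L : V → Finset ℕ} {v : V} {Φ : V → ℕ}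
    (hv : (G.neighborSet v).toFinset.card < (L v).card)
    (hΦ : IsLColoring G L Φ) {τ : ({v}ᶜ : Set V) → ℕ}
    (hstep : KempeStep (G.induce ({v}ᶜ : Set V)) (fun z => L ↑z) (fun z => Φ ↑z) τ) :
    ∃ Ψ, IsLColoring G L Ψ ∧ (∀ w : ({v}ᶜ : Set V), Ψ ↑w = τ w) ∧ LEquiv G L Φ Ψ := by
  obtain ⟨a, b, x, hab, hax, hτeq, hτL⟩ := hstep
  subst hτeq
  by_cases hchv : KempeChain G Φ a b ↑x v
  · rcases chain_hit hchv with ⟨hw, _⟩ | ⟨u, hu, hadj, hcolu, hcolv, hcu⟩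
    · exact absurd hw (by simp)
    by_cases hdex : ∃ d ∈ L v, d ∉ (G.neighborSet v).toFinset.image Φ ∪ {a, b}
    · -- recolor v to d, then swap
      obtain ⟨d, hdL, hdF⟩ := hdex
      rw [Finset.mem_union, not_or] at hdF
      obtain ⟨hdim, hdab⟩ := hdF
      rw [Finset.mem_insert, Finset.mem_singleton, not_or] at hdab
      obtain ⟨hda, hdb⟩ := hdab
      have hnb : ∀ u', G.Adj v u' → Φ u' ≠ d := by
        intro u' h' he
        exact hdim (Finset.mem_image.mpr ⟨u', Set.mem_toFinset.mpr ((G.mem_neighborSet v u').mpr h'), he⟩)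
      have hdv : Φ v ≠ d := by rcases hcolv with h | h <;> omega
      obtain ⟨hL2, hstep1⟩ := recolor_step hΦ v d hdL hdv hnb
      have hσ : (fun z : ({v}ᶜ : Set V) => Function.update Φ v d ↑z)
          = (fun z : ({v}ᶜ : Set V) => Φ ↑z) := by
        funext z
        exact Function.update_of_ne (Set.mem_compl_singleton_iff.mp z.2) d Φ
      have hnv2 : ¬ KempeChain G (Function.update Φ v d) a b ↑x v := by
        intro h
        rcases Relation.ReflTransGen.cases_tail h with h' | ⟨c, _, hr⟩
        · exact (Set.mem_compl_singleton_iff.mp x.2) h'.symm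
        · have hud : Function.update Φ v d v = d := Function.update_self v d Φ
          rcases hr.2.2 with h'' | h'' <;> omega
      have hax2 : Function.update Φ v d ↑x = a ∨ Function.update Φ v d ↑x = b := by
        rw [Function.update_of_ne (Set.mem_compl_singleton_iff.mp x.2)]; exact hax
      have hswapeq : kempeSwap (G.induce ({v}ᶜ : Set V))
            (fun z => Function.update Φ v d ↑z) a b x
          = kempeSwap (G.induce ({v}ᶜ : Set V)) (fun z => Φ ↑z) a b x := by
        rw [hσ]
      have hτL2 : IsLColoring (G.induce ({v}ᶜ : Set V)) (fun z => L ↑z)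
          (kempeSwap (G.induce ({v}ᶜ : Set V)) (fun z => Function.update Φ v d ↑z) a b x) := by
        rw [hswapeq]; exact hτL
      have hiff2 : ∀ w : ({v}ᶜ : Set V), KempeChain G (Function.update Φ v d) a b ↑x ↑w ↔
          KempeChain (G.induce ({v}ᶜ : Set V)) (fun z => Function.update Φ v d ↑z) a b x w :=
        fun w => ⟨fun h => by
          obtain ⟨hw, hc⟩ := chain_down hnv2 h
          rwa [Subtype.coe_eta] at hc, chain_up⟩
      have hvL2 : kempeSwap G (Function.update Φ v d) a b ↑x v ∈ L v := by
        unfold kempeSwap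
        rw [if_neg hnv2, Function.update_self]
        exact hdL
      obtain ⟨hL3, hstep2, hres⟩ := liftCore hL2 hab hax2 hτL2 hiff2 hvL2
      refine ⟨_, hL3, fun w => ?_, (Relation.ReflTransGen.single hstep1).tail hstep2⟩
      rw [hres w, hswapeq]
    · -- frozen case
      push_neg at hdex
      set N := (G.neighborSet v).toFinset with hN
      set e := if Φ v = a then b else a with he
      have huN : u ∈ N := Set.mem_toFinset.mpr ((G.mem_neighborSet v u).mpr hadj.symm)
      have hΦu : Φ u = e := by
        have h1 : Φ u ≠ Φ v := hΦ.2 hadj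
        rcases hcolv with h | h
        · rw [he, if_pos h]
          rcases hcolu with h' | h'
          · omega
          · exact h'
        · rw [he, if_neg (by omega)]
          rcases hcolu with h' | h'
          · exact h'
          · omega
      have heN : e ∈ N.image Φ := Finset.mem_image.mpr ⟨u, huN, hΦu⟩
      have hFsub : N.image Φ ∪ {a, b} ⊆ insert (Φ v) (N.image Φ) := by
        intro t ht
        rw [Finset.mem_union] at ht
        rcases ht with ht | ht
        · exact Finset.mem_insert_of_mem ht
        · rw [Finset.mem_insert, Finset.mem_singleton] at ht
          rw [Finset.mem_insert]
          rcases hcolv with h | h <;> rcases ht with ht | ht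
          · exact Or.inl (ht.trans h.symm)
          · refine Or.inr ?_
            rw [ht, show b = e from by rw [he, if_pos h]]
            exact heN
          · refine Or.inr ?_
            rw [ht, show a = e from by rw [he, if_neg (show ¬ Φ v = a by omega)]]
            exact heN
          · exact Or.inl (ht.trans h.symm)
      have hcard1 : (L v).card ≤ (N.image Φ ∪ {a, b}).card :=
        Finset.card_le_card (fun t ht => hdex t ht)
      have hcard2 : (insert (Φ v) (N.image Φ)).card ≤ (N.image Φ).card + 1 :=
        Finset.card_insert_le _ _
      have hcard3 : (N.image Φ ∪ {a, b}).card ≤ (insert (Φ v) (N.image Φ)).card :=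
        Finset.card_le_card hFsub
      have hcard4 : (N.image Φ).card ≤ N.card := Finset.card_image_le
      have hNcard : (N.image Φ).card = N.card := by omega
      have hinj : Set.InjOn Φ ↑N := Finset.card_image_iff.mp hNcard
      have hLveq : L v = N.image Φ ∪ {a, b} :=
        Finset.eq_of_subset_of_card_le (fun t ht => hdex t ht) (by omega)
      have heL : e ∈ L v := by
        rw [hLveq, Finset.mem_union]
        right
        rw [he]
        split_ifs <;> simp
      have H : ∀ w', G.Adj v w' → (Φ w' = a ∨ Φ w' = b) →
          ∃ hw' : w' ∈ ({v}ᶜ : Set V),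
            KempeChain (G.induce ({v}ᶜ : Set V)) (fun z => Φ ↑z) a b x ⟨w', hw'⟩ := by
        intro w' hadj' hcol'
        have h1 : Φ v ≠ Φ w' := hΦ.2 hadj'
        have hw'e : Φ w' = e := by
          rcases hcolv with h | h
          · rw [he, if_pos h]
            rcases hcol' with h' | h'
            · omega
            · exact h'
          · rw [he, if_neg (by omega)]
            rcases hcol' with h' | h'
            · exact h'
            · omega
        have hw'N : w' ∈ N := Set.mem_toFinset.mpr ((G.mem_neighborSet v w').mpr hadj')
        have : w' = u := hinj (Finset.mem_coe.mpr hw'N) (Finset.mem_coe.mpr huN) (hw'e.trans hΦu.symm)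
        subst this
        exact ⟨hu, hcu⟩
      have hiff : ∀ w : ({v}ᶜ : Set V), KempeChain G Φ a b ↑x ↑w ↔
          KempeChain (G.induce ({v}ᶜ : Set V)) (fun z => Φ ↑z) a b x w := by
        intro w
        constructor
        · intro h
          rcases chain_all H h with h' | ⟨hw', hc⟩
          · exact absurd h' (Set.mem_compl_singleton_iff.mp w.2)
          · rwa [Subtype.coe_eta] at hc
        · exact chain_up
      have hvL : kempeSwap G Φ a b ↑x v ∈ L v := by
        unfold kempeSwap
        rw [if_pos hchv]
        rcases hcolv with h | h
        · rw [if_pos h, show b = e from by rw [he, if_pos h]]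
          exact heL
        · rw [if_neg (by omega), if_pos h, show a = e from by rw [he, if_neg (show ¬ Φ v = a by omega)]]
          exact heL
      obtain ⟨hL', hstep', hres⟩ := liftCore hΦ hab hax hτL hiff hvL
      exact ⟨_, hL', hres, Relation.ReflTransGen.single hstep'⟩
  · -- v not in the chain at all
    have hiff : ∀ w : ({v}ᶜ : Set V), KempeChain G Φ a b ↑x ↑w ↔
        KempeChain (G.induce ({v}ᶜ : Set V)) (fun z => Φ ↑z) a b x w :=
      fun w => ⟨fun h => by
        obtain ⟨hw, hc⟩ := chain_down hchv h
        rwa [Subtype.coe_eta] at hc, chain_up⟩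
    have hvL : kempeSwap G Φ a b ↑x v ∈ L v := by
      unfold kempeSwap
      rw [if_neg hchv]
      exact hΦ.1 v
    obtain ⟨hL', hstep', hres⟩ := liftCore hΦ hab hax hτL hiff hvL
    exact ⟨_, hL', hres, Relation.ReflTransGen.single hstep'⟩

end AuxLemmas
/-- **Corollary 2.** Fix a graph `G`, a function `f : V(G) → ℤ⁺`, and a vertex `v` with
`f(v) > d(v)`.  If `G − v` is `f`-swappable, then `G` is `f`-swappable. -/
theorem corollary2 {V : Type*} [Fintype V] (G : SimpleGraph V) (f : V → ℕ) (hf : ∀ u, 0 < f u)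
    (v : V) (hv : (G.neighborSet v).ncard < f v)
    (hGv : FSwappable (G.induce ({v}ᶜ : Set V)) fun x => f ↑x) :
    FSwappable G f := by
  intro L hL φ ψ hφ hψ
  have hv' : (G.neighborSet v).toFinset.card < (L v).card := by
    rw [hL v, ← Set.ncard_eq_toFinset_card']
    exact hv
  have hφ' : IsLColoring (G.induce ({v}ᶜ : Set V)) (fun z => L ↑z) (fun z => φ ↑z) :=
    ⟨fun z => hφ.1 ↑z, fun p q h => hφ.2 h⟩
  have hψ' : IsLColoring (G.induce ({v}ᶜ : Set V)) (fun z => L ↑z) (fun z => ψ ↑z) :=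
    ⟨fun z => hψ.1 ↑z, fun p q h => hψ.2 h⟩
  have hGseq := hGv (fun z => L ↑z) (fun z => hL ↑z) _ _ hφ' hψ'
  have key : ∀ τ, Relation.ReflTransGen
      (KempeStep (G.induce ({v}ᶜ : Set V)) (fun z => L ↑z)) (fun z => φ ↑z) τ →
      ∃ Φ, IsLColoring G L Φ ∧ (∀ w : ({v}ᶜ : Set V), Φ ↑w = τ w) ∧ LEquiv G L φ Φ := by
    intro τ h
    induction h with
    | refl => exact ⟨φ, hφ, fun _ => rfl, Relation.ReflTransGen.refl⟩
    | @tail σ τ' h1 h2 ih =>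
      obtain ⟨Φ, hΦ, hres, heq⟩ := ih
      have hσΦ : (fun z : ({v}ᶜ : Set V) => Φ ↑z) = σ := funext hres
      rw [← hσΦ] at h2
      obtain ⟨Ψ, hΨ, hres', heq'⟩ := lift_step hv' hΦ h2
      exact ⟨Ψ, hΨ, hres', heq.trans heq'⟩
  obtain ⟨Φ, hΦL, hres, heq⟩ := key _ hGseq
  by_cases hfin : Φ v = ψ v
  · have hΦψ : Φ = ψ := by
      funext w
      by_cases hw : w = v
      · rw [hw]; exact hfin
      · exact hres ⟨w, Set.mem_compl_singleton_iff.mpr hw⟩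
    exact hΦψ ▸ heq
  · have hnb : ∀ u, G.Adj v u → Φ u ≠ ψ v := by
      intro u h
      have hu : u ≠ v := fun he => G.loopless.irrefl v (he ▸ h)
      rw [hres ⟨u, Set.mem_compl_singleton_iff.mpr hu⟩]
      exact fun he => (hψ.2 h) he.symm
    obtain ⟨hL2, hstep1⟩ := recolor_step hΦL v (ψ v) (hψ.1 v) hfin hnb
    have hupd : Function.update Φ v (ψ v) = ψ := by
      funext w
      by_cases hw : w = v
      · rw [hw, Function.update_self]
      · rw [Function.update_of_ne hw]
        exact hres ⟨w, Set.mem_compl_singleton_iff.mpr hw⟩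
    exact heq.tail (hupd ▸ hstep1)
end
end

section
/- Fix a connected graph G, a list assignment L for G, and a vertex v ∈ V(G) with |L(v)| > d(v). If G − v is L-swappable (with respect to the restriction of L to G − v), then G is L-swappable. -/
noncomputable section
open scoped Classical

namespace Lemma4Aux

variable {V : Type*}

lemma kempeChain_comm (G : SimpleGraph V) (φ : V → ℕ) (a b : ℕ) :
    KempeChain G φ a b = KempeChain G φ b a := by
  unfold KempeChain
  have h : (fun u w => G.Adj u w ∧ (φ u = a ∨ φ u = b) ∧ (φ w = a ∨ φ w = b))
      = fun u w => G.Adj u w ∧ (φ u = b ∨ φ u = a) ∧ (φ w = b ∨ φ w = a) := by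
    funext u w; exact propext (by tauto)
  rw [h]

lemma kempeSwap_comm (G : SimpleGraph V) (φ : V → ℕ) (a b : ℕ) (x : V) :
    kempeSwap G φ a b x = kempeSwap G φ b a x := by
  funext w
  unfold kempeSwap
  rw [kempeChain_comm]
  split_ifs <;> omega

lemma isLColoring_update (G : SimpleGraph V) (L : V → Finset ℕ) (φ : V → ℕ)
    (hφ : IsLColoring G L φ) (v : V) (c : ℕ) (hc : c ∈ L v)
    (hfree : ∀ u, G.Adj v u → φ u ≠ c) :
    IsLColoring G L (Function.update φ v c) := by
  constructor
  · intro w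
    rcases eq_or_ne w v with rfl | h
    · simpa using hc
    · simpa [Function.update_of_ne h] using hφ.1 w
  · intro u w hadj
    rcases eq_or_ne u v with rfl | hu
    · rw [Function.update_self, Function.update_of_ne hadj.ne']
      exact fun h => hfree w hadj h.symm
    · rw [Function.update_of_ne hu]
      rcases eq_or_ne w v with rfl | hw
      · rw [Function.update_self]
        exact hfree u hadj.symm
      · rw [Function.update_of_ne hw]; exact hφ.2 hadj

lemma lequiv_update (G : SimpleGraph V) (L : V → Finset ℕ) (φ : V → ℕ)
    (hφ : IsLColoring G L φ) (v : V) (c : ℕ) (hc : c ∈ L v)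
    (hfree : ∀ u, G.Adj v u → φ u ≠ c) :
    LEquiv G L φ (Function.update φ v c) := by
  rcases eq_or_ne c (φ v) with rfl | hne
  · rw [Function.update_eq_self v φ]; exact Relation.ReflTransGen.refl
  · apply Relation.ReflTransGen.single
    refine ⟨φ v, c, v, Ne.symm hne, Or.inl rfl, ?_, isLColoring_update G L φ hφ v c hc hfree⟩
    funext w
    unfold kempeSwap
    by_cases hw : w = v
    · subst hw
      have hch : KempeChain G φ (φ w) c w w := Relation.ReflTransGen.refl
      rw [if_pos hch, if_pos rfl, Function.update_self]
    · have hnc : ¬ KempeChain G φ (φ v) c v w := by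
        intro h
        rcases Relation.ReflTransGen.cases_head h with h1 | ⟨u, ⟨hadj, _, hu⟩, _⟩
        · exact hw h1.symm
        · rcases hu with h1 | h1
          · exact (hφ.2 hadj) h1.symm
          · exact hfree u hadj h1
      rw [if_neg hnc, Function.update_of_ne hw]

lemma chain_lift (G : SimpleGraph V) (φ : V → ℕ) (a b : ℕ) (v : V)
    (x z : ({v}ᶜ : Set V))
    (h : KempeChain (G.induce ({v}ᶜ : Set V)) (fun w => φ ↑w) a b x z) :
    KempeChain G φ a b ↑x ↑z := by
  refine Relation.ReflTransGen.lift (fun w : ({v}ᶜ : Set V) => (↑w : V)) ?_ _ _ h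
  rintro u w ⟨hadj, h1, h2⟩
  exact ⟨hadj, h1, h2⟩

lemma chain_restrict_iso (G : SimpleGraph V) (φ : V → ℕ) (a b : ℕ) (v : V)
    (hiso : ∀ u, G.Adj u v → φ u = a ∨ φ u = b → φ v = a ∨ φ v = b → False)
    (x : ({v}ᶜ : Set V)) :
    ∀ y, KempeChain G φ a b ↑x y → ∃ hy : y ≠ v,
      KempeChain (G.induce ({v}ᶜ : Set V)) (fun w => φ ↑w) a b x ⟨y, hy⟩ := by
  intro y h
  induction h with
  | refl => exact ⟨x.2, Relation.ReflTransGen.refl⟩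
  | @tail p q h1 h2 ih =>
    obtain ⟨hp, hchain⟩ := ih
    have hq : q ≠ v := by
      intro hq; subst hq
      exact hiso p h2.1 h2.2.1 h2.2.2
    exact ⟨hq, hchain.tail ⟨h2.1, h2.2.1, h2.2.2⟩⟩

lemma chain_restrict_tight (G : SimpleGraph V) (φ : V → ℕ) (a b : ℕ) (v u0 : V)
    (hu0v : u0 ≠ v)
    (huniq : ∀ y, G.Adj y v → φ y = a ∨ φ y = b → y = u0)
    (x : ({v}ᶜ : Set V)) :
    ∀ y, KempeChain G φ a b ↑x y →
      (y = v → KempeChain (G.induce ({v}ᶜ : Set V)) (fun w => φ ↑w) a b x ⟨u0, hu0v⟩) ∧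
      (∀ hy : y ≠ v, KempeChain (G.induce ({v}ᶜ : Set V)) (fun w => φ ↑w) a b x ⟨y, hy⟩) := by
  intro y h
  induction h with
  | refl =>
    refine ⟨fun h => absurd h x.2, fun hy => ?_⟩
    have e : (⟨(↑x : V), hy⟩ : ({v}ᶜ : Set V)) = x := Subtype.ext rfl
    rw [e]
    exact Relation.ReflTransGen.refl
  | @tail p q h1 h2 ih =>
    constructor
    · intro hq
      have hadj : G.Adj p v := by rw [← hq]; exact h2.1
      have hp : p ≠ v := hadj.ne
      have hpu : p = u0 := huniq p hadj h2.2.1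
      have := ih.2 hp
      rwa [show (⟨p, hp⟩ : ({v}ᶜ : Set V)) = ⟨u0, hu0v⟩ from Subtype.ext hpu] at this
    · intro hq
      rcases eq_or_ne p v with hpv | hp
      · have hadj : G.Adj q v := by rw [← hpv]; exact h2.1.symm
        have hqu : q = u0 := huniq q hadj h2.2.2
        have := ih.1 hpv
        rwa [show (⟨u0, hu0v⟩ : ({v}ᶜ : Set V)) = ⟨q, hq⟩ from Subtype.ext hqu.symm] at this
      · exact (ih.2 hp).tail ⟨h2.1, h2.2.1, h2.2.2⟩

lemma swap_restrict_eq (G : SimpleGraph V) (φ : V → ℕ) (a b : ℕ) (v : V)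
    (x : ({v}ᶜ : Set V))
    (hiff : ∀ w : ({v}ᶜ : Set V), KempeChain G φ a b ↑x ↑w ↔
      KempeChain (G.induce ({v}ᶜ : Set V)) (fun w => φ ↑w) a b x w) :
    ∀ w : ({v}ᶜ : Set V), kempeSwap G φ a b ↑x ↑w
      = kempeSwap (G.induce ({v}ᶜ : Set V)) (fun w => φ ↑w) a b x w := by
  intro w
  unfold kempeSwap
  by_cases h : KempeChain (G.induce ({v}ᶜ : Set V)) (fun w => φ ↑w) a b x w
  · rw [if_pos ((hiff w).mpr h), if_pos h]
  · rw [if_neg (fun hh => h ((hiff w).mp hh)), if_neg h]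

lemma lift_iso (G : SimpleGraph V) (L : V → Finset ℕ) (v : V) (φ : V → ℕ)
    (hφ : IsLColoring G L φ) (a b : ℕ) (x : ({v}ᶜ : Set V)) (hab : a ≠ b)
    (hx : φ ↑x = a ∨ φ ↑x = b)
    (hcol : IsLColoring (G.induce ({v}ᶜ : Set V)) (fun w => L ↑w)
      (kempeSwap (G.induce ({v}ᶜ : Set V)) (fun w => φ ↑w) a b x))
    (hiso : ∀ u, G.Adj u v → φ u = a ∨ φ u = b → φ v = a ∨ φ v = b → False) :
    ∃ ψ, IsLColoring G L ψ ∧ LEquiv G L φ ψ ∧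
      ∀ w : ({v}ᶜ : Set V), ψ ↑w = kempeSwap (G.induce ({v}ᶜ : Set V)) (fun w => φ ↑w) a b x w := by
  set ψ := kempeSwap G φ a b ↑x with hψ
  have hvchain : ¬ KempeChain G φ a b ↑x v := by
    intro h
    rcases Relation.ReflTransGen.cases_tail h with h1 | ⟨c, _, hc⟩
    · exact x.2 h1.symm
    · exact hiso c hc.1 hc.2.1 hc.2.2
  have hiff : ∀ w : ({v}ᶜ : Set V), KempeChain G φ a b ↑x ↑w ↔
      KempeChain (G.induce ({v}ᶜ : Set V)) (fun w => φ ↑w) a b x w := by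
    intro w
    constructor
    · intro h
      obtain ⟨hy, hch⟩ := chain_restrict_iso G φ a b v hiso x ↑w h
      rwa [show (⟨(↑w : V), hy⟩ : ({v}ᶜ : Set V)) = w from Subtype.ext rfl] at hch
    · exact chain_lift G φ a b v x w
  have hrest := swap_restrict_eq G φ a b v x hiff
  have hψv : ψ v = φ v := by rw [hψ]; unfold kempeSwap; rw [if_neg hvchain]
  have hval : ∀ w, ψ w = φ w ∨ ((φ w = a ∨ φ w = b) ∧ (ψ w = a ∨ ψ w = b)) := by
    intro w
    rw [hψ]; unfold kempeSwap
    split_ifs <;> tauto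
  have key : ∀ w, G.Adj v w → ψ v ≠ ψ w := by
    intro w hadj
    rcases hval w with h | ⟨h1, h2⟩
    · rw [hψv, h]; exact hφ.2 hadj
    · intro e
      exact hiso w hadj.symm h1 (by rw [← hψv, e]; exact h2)
  have hψcol : IsLColoring G L ψ := by
    constructor
    · intro w
      rcases eq_or_ne w v with rfl | hw
      · rw [hψv]; exact hφ.1 w
      · rw [show ψ w = _ from hrest ⟨w, hw⟩]
        exact hcol.1 ⟨w, hw⟩
    · intro u w hadj
      rcases eq_or_ne u v with rfl | hu
      · exact key w hadj
      · rcases eq_or_ne w v with rfl | hw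
        · exact (key u hadj.symm).symm
        · rw [show ψ u = _ from hrest ⟨u, hu⟩, show ψ w = _ from hrest ⟨w, hw⟩]
          exact hcol.2 (by exact hadj : (G.induce ({v}ᶜ : Set V)).Adj ⟨u, hu⟩ ⟨w, hw⟩)
  exact ⟨ψ, hψcol, Relation.ReflTransGen.single ⟨a, b, ↑x, hab, hx, hψ, hψcol⟩, hrest⟩

lemma lift_tight (G : SimpleGraph V) (L : V → Finset ℕ) (v : V) (φ : V → ℕ)
    (hφ : IsLColoring G L φ) (a b : ℕ) (x : ({v}ᶜ : Set V)) (hab : a ≠ b)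
    (hx : φ ↑x = a ∨ φ ↑x = b)
    (hcol : IsLColoring (G.induce ({v}ᶜ : Set V)) (fun w => L ↑w)
      (kempeSwap (G.induce ({v}ᶜ : Set V)) (fun w => φ ↑w) a b x))
    (hva : φ v = a) (u0 : V) (hadj0 : G.Adj v u0) (hu0b : φ u0 = b)
    (huniq : ∀ y, G.Adj v y → φ y = b → y = u0) (hbL : b ∈ L v) :
    ∃ ψ, IsLColoring G L ψ ∧ LEquiv G L φ ψ ∧
      ∀ w : ({v}ᶜ : Set V), ψ ↑w = kempeSwap (G.induce ({v}ᶜ : Set V)) (fun w => φ ↑w) a b x w := by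
  set ψ := kempeSwap G φ a b ↑x with hψ
  have hu0v : u0 ≠ v := hadj0.ne'
  have huniq' : ∀ y, G.Adj y v → φ y = a ∨ φ y = b → y = u0 := by
    intro y h hy
    rcases hy with hy | hy
    · exact absurd (hva ▸ hy.symm : φ v = φ y) (hφ.2 h.symm)
    · exact huniq y h.symm hy
  have ct := chain_restrict_tight G φ a b v u0 hu0v huniq' x
  have hiff : ∀ w : ({v}ᶜ : Set V), KempeChain G φ a b ↑x ↑w ↔
      KempeChain (G.induce ({v}ᶜ : Set V)) (fun w => φ ↑w) a b x w := by
    intro w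
    constructor
    · intro h
      have := (ct ↑w h).2 w.2
      rwa [show (⟨(↑w : V), w.2⟩ : ({v}ᶜ : Set V)) = w from Subtype.ext rfl] at this
    · exact chain_lift G φ a b v x w
  have hrest := swap_restrict_eq G φ a b v x hiff
  have chainu0v : KempeChain G φ a b ↑x u0 ↔ KempeChain G φ a b ↑x v := by
    constructor
    · intro h
      exact h.tail ⟨hadj0.symm, Or.inr hu0b, Or.inl hva⟩
    · intro h
      exact chain_lift G φ a b v x ⟨u0, hu0v⟩ ((ct v h).1 rfl)
  have hψv : ψ v = if KempeChain G φ a b ↑x v then b else a := by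
    rw [hψ]; unfold kempeSwap
    by_cases h : KempeChain G φ a b ↑x v
    · rw [if_pos h, if_pos h, if_pos hva]
    · rw [if_neg h, if_neg h, hva]
  have hna : φ u0 ≠ a := by rw [hu0b]; exact fun e => hab e.symm
  have hψu0 : ψ u0 = if KempeChain G φ a b ↑x u0 then a else b := by
    rw [hψ]; unfold kempeSwap
    by_cases h : KempeChain G φ a b ↑x u0
    · rw [if_pos h, if_pos h, if_neg hna, if_pos hu0b]
    · rw [if_neg h, if_neg h, hu0b]
  have hwother : ∀ w, G.Adj v w → w ≠ u0 → ψ w = φ w := by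
    intro w hadj hw
    have h1 : φ w ≠ a := fun e => hφ.2 hadj (hva.trans e.symm)
    have h2 : φ w ≠ b := fun e => hw (huniq w hadj e)
    rw [hψ]; unfold kempeSwap
    split_ifs <;> tauto
  have key : ∀ w, G.Adj v w → ψ v ≠ ψ w := by
    intro w hadj
    by_cases hw : w = u0
    · subst hw
      rw [hψv, hψu0]
      by_cases hcv : KempeChain G φ a b ↑x v
      · rw [if_pos hcv, if_pos (chainu0v.mpr hcv)]; exact hab.symm
      · rw [if_neg hcv, if_neg (fun h => hcv (chainu0v.mp h))]; exact hab
    · rw [hψv, hwother w hadj hw]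
      by_cases hcv : KempeChain G φ a b ↑x v
      · rw [if_pos hcv]
        exact fun e => hw (huniq w hadj e.symm)
      · rw [if_neg hcv]
        exact fun e => hφ.2 hadj (hva.trans e)
  have hψcol : IsLColoring G L ψ := by
    constructor
    · intro w
      rcases eq_or_ne w v with rfl | hw
      · rw [hψv]
        by_cases hcv : KempeChain G φ a b ↑x w
        · rw [if_pos hcv]; exact hbL
        · rw [if_neg hcv]; exact hva ▸ hφ.1 w
      · rw [show ψ w = _ from hrest ⟨w, hw⟩]
        exact hcol.1 ⟨w, hw⟩
    · intro u w hadj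
      rcases eq_or_ne u v with rfl | hu
      · exact key w hadj
      · rcases eq_or_ne w v with rfl | hw
        · exact (key u hadj.symm).symm
        · rw [show ψ u = _ from hrest ⟨u, hu⟩, show ψ w = _ from hrest ⟨w, hw⟩]
          exact hcol.2 (by exact hadj : (G.induce ({v}ᶜ : Set V)).Adj ⟨u, hu⟩ ⟨w, hw⟩)
  exact ⟨ψ, hψcol, Relation.ReflTransGen.single ⟨a, b, ↑x, hab, hx, hψ, hψcol⟩, hrest⟩

lemma counting [Fintype V] (G : SimpleGraph V) (L : V → Finset ℕ) (φ : V → ℕ)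
    (hφ : IsLColoring G L φ) (v : V) (a b : ℕ)
    (hv : (G.neighborSet v).ncard < (L v).card)
    (hva : φ v = a) (hab : a ≠ b)
    (hB2 : ∀ c ∈ L v, c ≠ a → c ≠ b → ∃ u, G.Adj v u ∧ φ u = c)
    (u1 : V) (hu1 : G.Adj v u1) (hu1b : φ u1 = b) :
    b ∈ L v ∧ ∀ u, G.Adj v u → φ u = b → u = u1 := by
  classical
  set N : Finset V := (G.neighborSet v).toFinset with hN
  have hmemN : ∀ u, u ∈ N ↔ G.Adj v u := by
    intro u; rw [hN, Set.mem_toFinset]; rfl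
  have hcard : N.card = (G.neighborSet v).ncard := (Set.ncard_eq_toFinset_card' _).symm
  have haL : a ∈ L v := hva ▸ hφ.1 v
  have hu1N : u1 ∈ N := (hmemN u1).mpr hu1
  have main : ∀ u2 ∈ N, ((∀ c ∈ (L v).erase a, ∃ u ∈ N.erase u2, φ u = c) → False) := by
    intro u2 hu2N hsub
    have hsubset : (L v).erase a ⊆ (N.erase u2).image φ := by
      intro c hc
      obtain ⟨u, hu, huc⟩ := hsub c hc
      exact Finset.mem_image.mpr ⟨u, hu, huc⟩
    have h1 : ((L v).erase a).card ≤ ((N.erase u2).image φ).card :=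
      Finset.card_le_card hsubset
    have h2 : ((N.erase u2).image φ).card ≤ (N.erase u2).card := Finset.card_image_le
    have h3 : ((L v).erase a).card = (L v).card - 1 := Finset.card_erase_of_mem haL
    have h4 : (N.erase u2).card = N.card - 1 := Finset.card_erase_of_mem hu2N
    have h5 : 1 ≤ N.card := Finset.card_pos.mpr ⟨u1, hu1N⟩
    have h6 : 1 ≤ (L v).card := Finset.card_pos.mpr ⟨a, haL⟩
    rw [hcard] at h4 h5
    omega
  constructor
  · by_contra hbL
    refine main u1 hu1N ?_
    intro c hc
    have hcL : c ∈ L v := Finset.mem_of_mem_erase hc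
    have hca : c ≠ a := Finset.ne_of_mem_erase hc
    have hcb : c ≠ b := fun e => hbL (e ▸ hcL)
    obtain ⟨u, hu, huc⟩ := hB2 c hcL hca hcb
    refine ⟨u, Finset.mem_erase.mpr ⟨fun e => hcb ?_, (hmemN u).mpr hu⟩, huc⟩
    rw [← huc, e, hu1b]
  · intro u2 hu2 hu2b
    by_contra hne
    refine main u2 ((hmemN u2).mpr hu2) ?_
    intro c hc
    have hcL : c ∈ L v := Finset.mem_of_mem_erase hc
    have hca : c ≠ a := Finset.ne_of_mem_erase hc
    rcases eq_or_ne c b with rfl | hcb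
    · exact ⟨u1, Finset.mem_erase.mpr ⟨fun e => hne e.symm, hu1N⟩, hu1b⟩
    · obtain ⟨u, hu, huc⟩ := hB2 c hcL hca hcb
      refine ⟨u, Finset.mem_erase.mpr ⟨fun e => hcb ?_, (hmemN u).mpr hu⟩, huc⟩
      rw [← huc, e, hu2b]

lemma lift_aux [Fintype V] (G : SimpleGraph V) (L : V → Finset ℕ) (v : V)
    (hv : (G.neighborSet v).ncard < (L v).card) (φ : V → ℕ) (hφ : IsLColoring G L φ)
    (a b : ℕ) (x : ({v}ᶜ : Set V)) (hab : a ≠ b) (hx : φ ↑x = a ∨ φ ↑x = b)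
    (hcol : IsLColoring (G.induce ({v}ᶜ : Set V)) (fun w => L ↑w)
      (kempeSwap (G.induce ({v}ᶜ : Set V)) (fun w => φ ↑w) a b x))
    (hva : φ v = a) :
    ∃ ψ, IsLColoring G L ψ ∧ LEquiv G L φ ψ ∧
      ∀ w : ({v}ᶜ : Set V), ψ ↑w = kempeSwap (G.induce ({v}ᶜ : Set V)) (fun w => φ ↑w) a b x w := by
  by_cases hnb : ∃ u, G.Adj v u ∧ φ u = b
  · obtain ⟨u1, hu1, hu1b⟩ := hnb
    by_cases hfree : ∃ c ∈ L v, c ≠ a ∧ c ≠ b ∧ ∀ u, G.Adj v u → φ u ≠ c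
    · obtain ⟨c, hcL, hca, hcb, hcf⟩ := hfree
      set φ2 := Function.update φ v c with hφ2
      have hφ2col := isLColoring_update G L φ hφ v c hcL hcf
      have heq : LEquiv G L φ φ2 := lequiv_update G L φ hφ v c hcL hcf
      have hsame : (fun w : ({v}ᶜ : Set V) => φ2 ↑w) = fun w : ({v}ᶜ : Set V) => φ ↑w := by
        funext w
        exact Function.update_of_ne w.2 c φ
      have hx2 : φ2 ↑x = a ∨ φ2 ↑x = b := by
        rw [hφ2, Function.update_of_ne x.2]; exact hx
      have hcol2 : IsLColoring (G.induce ({v}ᶜ : Set V)) (fun w => L ↑w)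
          (kempeSwap (G.induce ({v}ᶜ : Set V)) (fun w => φ2 ↑w) a b x) := by
        rw [hsame]; exact hcol
      have hiso2 : ∀ u, G.Adj u v → φ2 u = a ∨ φ2 u = b → φ2 v = a ∨ φ2 v = b → False := by
        intro u _ _ hv2
        rw [hφ2, Function.update_self] at hv2
        tauto
      obtain ⟨ψ, h1, h2, h3⟩ := lift_iso G L v φ2 hφ2col a b x hab hx2 hcol2 hiso2
      refine ⟨ψ, h1, heq.trans h2, ?_⟩
      intro w
      rw [h3 w, hsame]
    · push_neg at hfree
      obtain ⟨hbL, huniq⟩ := counting G L φ hφ v a b hv hva hab hfree u1 hu1 hu1b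
      exact lift_tight G L v φ hφ a b x hab hx hcol hva u1 hu1 hu1b huniq hbL
  · refine lift_iso G L v φ hφ a b x hab hx hcol ?_
    intro u hadj hu _
    rcases hu with hu | hu
    · exact hφ.2 hadj (hu.trans hva.symm)
    · exact hnb ⟨u, hadj.symm, hu⟩

lemma lift_step [Fintype V] (G : SimpleGraph V) (L : V → Finset ℕ) (v : V)
    (hv : (G.neighborSet v).ncard < (L v).card) (φ : V → ℕ) (hφ : IsLColoring G L φ)
    (ψ' : ({v}ᶜ : Set V) → ℕ)
    (hstep : KempeStep (G.induce ({v}ᶜ : Set V)) (fun w => L ↑w) (fun w => φ ↑w) ψ') :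
    ∃ ψ, IsLColoring G L ψ ∧ LEquiv G L φ ψ ∧ ∀ w : ({v}ᶜ : Set V), ψ ↑w = ψ' w := by
  obtain ⟨a, b, x, hab, hx, rfl, hcol⟩ := hstep
  by_cases hva : φ v = a
  · exact lift_aux G L v hv φ hφ a b x hab hx hcol hva
  by_cases hvb : φ v = b
  · have hc : kempeSwap (G.induce ({v}ᶜ : Set V)) (fun w => φ ↑w) a b x
        = kempeSwap (G.induce ({v}ᶜ : Set V)) (fun w => φ ↑w) b a x :=
      kempeSwap_comm _ _ a b x
    obtain ⟨ψ, h1, h2, h3⟩ := lift_aux G L v hv φ hφ b a x hab.symm hx.symm (hc ▸ hcol) hvb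
    refine ⟨ψ, h1, h2, fun w => ?_⟩
    rw [hc]
    exact h3 w
  · refine lift_iso G L v φ hφ a b x hab hx hcol ?_
    intro u _ _ hvv
    rcases hvv with h | h
    · exact hva h
    · exact hvb h

end Lemma4Aux

/-- **Lemma 4.** Fix a connected graph `G`, a list assignment `L` for `G`, and `v ∈ V(G)`
with `|L(v)| > d(v)`.  If `G − v` is `L`-swappable (with respect to the restriction of `L`),
then `G` is `L`-swappable. -/
theorem lemma4 {V : Type*} [Fintype V] (G : SimpleGraph V) (hconn : G.Connected)
    (L : V → Finset ℕ) (v : V) (hv : (G.neighborSet v).ncard < (L v).card)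
    (hGv : LSwappable (G.induce ({v}ᶜ : Set V)) fun x => L ↑x) :
    LSwappable G L := by
  intro φ ψ hφ hψ
  have hφ' : IsLColoring (G.induce ({v}ᶜ : Set V)) (fun x => L ↑x) (fun x => φ ↑x) :=
    ⟨fun w => hφ.1 ↑w, fun u w h => hφ.2 h⟩
  have hψ' : IsLColoring (G.induce ({v}ᶜ : Set V)) (fun x => L ↑x) (fun x => ψ ↑x) :=
    ⟨fun w => hψ.1 ↑w, fun u w h => hψ.2 h⟩
  have hequiv := hGv _ _ hφ' hψ'
  have key : ∀ χ' : ({v}ᶜ : Set V) → ℕ,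
      LEquiv (G.induce ({v}ᶜ : Set V)) (fun x => L ↑x) (fun x => φ ↑x) χ' →
      ∃ χ, IsLColoring G L χ ∧ LEquiv G L φ χ ∧ ∀ w : ({v}ᶜ : Set V), χ ↑w = χ' w := by
    intro χ' h
    induction h with
    | refl => exact ⟨φ, hφ, Relation.ReflTransGen.refl, fun w => rfl⟩
    | @tail p q h1 h2 ih =>
      obtain ⟨χ, hχ, hEq, hres⟩ := ih
      have hp : p = fun w : ({v}ᶜ : Set V) => χ ↑w := funext fun w => (hres w).symm
      rw [hp] at h2
      obtain ⟨χ2, h21, h22, h23⟩ := Lemma4Aux.lift_step G L v hv χ hχ q h2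
      exact ⟨χ2, h21, hEq.trans h22, h23⟩
  obtain ⟨χ, hχ, hEq, hres⟩ := key _ hequiv
  have hfree : ∀ u, G.Adj v u → χ u ≠ ψ v := by
    intro u hadj
    have hu : u ≠ v := hadj.ne'
    rw [show χ u = ψ u from hres ⟨u, hu⟩]
    exact fun e => hψ.2 hadj e.symm
  have hupd := Lemma4Aux.lequiv_update G L χ hχ v (ψ v) (hψ.1 v) hfree
  have hfin : Function.update χ v (ψ v) = ψ := by
    funext w
    rcases eq_or_ne w v with rfl | hw
    · rw [Function.update_self]
    · rw [Function.update_of_ne hw]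
      exact hres ⟨w, hw⟩
  rw [hfin] at hupd
  exact hEq.trans hupd
end
end

section
/- Let G be a connected graph and L a list assignment for G. If there exists a linear order σ on V(G) such that each vertex v is preceded in σ by fewer than |L(v)| of its neighbors, then G is L-swappable. -/
noncomputable section
open scoped Classical

set_option linter.unusedVariables false

namespace KempeAux

universe u

variable {V : Type u}

lemma chain_colors {G : SimpleGraph V} {φ : V → ℕ} {a b : ℕ} {x y : V}
    (h : KempeChain G φ a b x y) : x = y ∨ (φ y = a ∨ φ y = b) := by
  induction h with
  | refl => exact Or.inl rfl
  | tail h₁ h₂ _ => exact Or.inr h₂.2.2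

lemma swap_apply_of_ne {G : SimpleGraph V} {φ : V → ℕ} {a b : ℕ} {x w : V}
    (h1 : φ w ≠ a) (h2 : φ w ≠ b) : kempeSwap G φ a b x w = φ w := by
  unfold kempeSwap
  split_ifs <;> simp_all

lemma swap_mem {G : SimpleGraph V} {φ : V → ℕ} {a b : ℕ} {x w : V} :
    kempeSwap G φ a b x w = φ w ∨ kempeSwap G φ a b x w = a ∨ kempeSwap G φ a b x w = b := by
  unfold kempeSwap
  split_ifs <;> simp_all

lemma chain_comm (G : SimpleGraph V) (φ : V → ℕ) (a b : ℕ) :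
    KempeChain G φ a b = KempeChain G φ b a := by
  have h : (fun u w => G.Adj u w ∧ (φ u = a ∨ φ u = b) ∧ (φ w = a ∨ φ w = b))
      = (fun u w => G.Adj u w ∧ (φ u = b ∨ φ u = a) ∧ (φ w = b ∨ φ w = a)) := by
    funext u w
    exact propext (by tauto)
  unfold KempeChain
  rw [h]

lemma swap_comm (G : SimpleGraph V) (φ : V → ℕ) {a b : ℕ} (hab : a ≠ b) (x : V) :
    kempeSwap G φ a b x = kempeSwap G φ b a x := by
  funext w
  unfold kempeSwap
  rw [chain_comm G φ a b]
  by_cases h : KempeChain G φ b a x w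
  · rw [if_pos h, if_pos h]
    by_cases h1 : φ w = a <;> by_cases h2 : φ w = b <;> simp_all
  · rw [if_neg h, if_neg h]

lemma recolor_eq {G : SimpleGraph V} {L : V → Finset ℕ} {φ : V → ℕ}
    (hφ : IsLColoring G L φ) {v : V} {c : ℕ}
    (hnbr : ∀ u, G.Adj u v → φ u ≠ c) :
    kempeSwap G φ (φ v) c v = Function.update φ v c := by
  have hchain : ∀ y, KempeChain G φ (φ v) c v y → y = v := by
    intro y h
    induction h with
    | refl => rfl
    | tail h₁ h₂ ih =>
      subst ih
      exfalso
      rcases h₂ with ⟨hadj, _, hcol⟩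
      rcases hcol with h' | h'
      · exact hφ.2 hadj h'.symm
      · exact hnbr _ hadj.symm h'
  funext y
  by_cases hy : y = v
  · rw [hy]
    unfold kempeSwap
    rw [if_pos (show KempeChain G φ (φ v) c v v from Relation.ReflTransGen.refl), if_pos rfl,
      Function.update_self]
  · unfold kempeSwap
    rw [if_neg (fun h => hy (hchain y h)), Function.update_of_ne hy]

lemma recolor_step {G : SimpleGraph V} {L : V → Finset ℕ} {φ : V → ℕ}
    (hφ : IsLColoring G L φ) {v : V} {c : ℕ} (hc : c ∈ L v) (hne : c ≠ φ v)
    (hnbr : ∀ u, G.Adj u v → φ u ≠ c) :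
    KempeStep G L φ (Function.update φ v c) ∧ IsLColoring G L (Function.update φ v c) := by
  have hcol : IsLColoring G L (Function.update φ v c) := by
    constructor
    · intro u
      by_cases hu : u = v
      · subst hu; rw [Function.update_self]; exact hc
      · rw [Function.update_of_ne hu]; exact hφ.1 u
    · intro u w hadj
      by_cases hu : u = v <;> by_cases hw : w = v
      · subst hu; subst hw; exact absurd hadj (G.irrefl)
      · subst hu
        rw [Function.update_self, Function.update_of_ne hw]
        exact fun h => hnbr w hadj.symm h.symm
      · subst hw
        rw [Function.update_self, Function.update_of_ne hu]
        exact hnbr u hadj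
      · rw [Function.update_of_ne hu, Function.update_of_ne hw]
        exact hφ.2 hadj
  refine ⟨⟨φ v, c, v, Ne.symm hne, Or.inl rfl, (recolor_eq hφ hnbr).symm, hcol⟩, hcol⟩

section Restrict

variable {G : SimpleGraph V} {L : V → Finset ℕ} {v : V}

lemma chain_lift {φ : V → ℕ} {a b : ℕ} {x y : {u : V // u ≠ v}}
    (h : KempeChain (G.comap Subtype.val) (fun u => φ u.val) a b x y) :
    KempeChain G φ a b x.val y.val :=
  Relation.ReflTransGen.lift Subtype.val (fun _ _ hz => hz) x y h

lemma chain_restrict {φ : V → ℕ} {a b : ℕ} {x : {u : V // u ≠ v}}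
    (hv : ∀ y, KempeChain G φ a b x.val y → y ≠ v) :
    ∀ y, KempeChain G φ a b x.val y → ∀ (hy : y ≠ v),
      KempeChain (G.comap Subtype.val) (fun u => φ u.val) a b x ⟨y, hy⟩ := by
  intro y h
  induction h with
  | refl =>
    intro hy
    have : (⟨x.val, hy⟩ : {u : V // u ≠ v}) = x := Subtype.ext rfl
    rw [this]
    exact Relation.ReflTransGen.refl
  | tail h₁ h₂ ih =>
    intro hy
    exact (ih (hv _ h₁)).tail ⟨h₂.1, h₂.2.1, h₂.2.2⟩

lemma not_chain_of_color {φ : V → ℕ} {a b : ℕ} {x : {u : V // u ≠ v}}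
    (hva : φ v ≠ a) (hvb : φ v ≠ b) :
    ∀ y, KempeChain G φ a b x.val y → y ≠ v := by
  intro y h
  rcases chain_colors h with h' | h'
  · exact h' ▸ x.2
  · rintro rfl
    rcases h' with h' | h' <;> [exact hva h'; exact hvb h']

lemma not_chain_of_nbr {φ : V → ℕ} {a b : ℕ} {x : {u : V // u ≠ v}}
    (hnbr : ∀ u, G.Adj u v → φ u ≠ a ∧ φ u ≠ b) :
    ∀ y, KempeChain G φ a b x.val y → y ≠ v := by
  intro y h
  induction h with
  | refl => exact x.2
  | tail h₁ h₂ _ =>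
    rintro rfl
    rcases h₂.2.1 with h' | h' <;>
      [exact (hnbr _ h₂.1).1 h'; exact (hnbr _ h₂.1).2 h']

lemma swap_restrict {φ : V → ℕ} {a b : ℕ} {x : {u : V // u ≠ v}}
    (hv : ∀ y, KempeChain G φ a b x.val y → y ≠ v) :
    (∀ y : {u : V // u ≠ v}, kempeSwap G φ a b x.val y.val
        = kempeSwap (G.comap Subtype.val) (fun u => φ u.val) a b x y)
    ∧ kempeSwap G φ a b x.val v = φ v := by
  constructor
  · intro y
    by_cases hc : KempeChain G φ a b x.val y.val
    · have hc' : KempeChain (G.comap Subtype.val) (fun u => φ u.val) a b x y := by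
        have := chain_restrict hv y.val hc y.2
        simpa using this
      unfold kempeSwap
      rw [if_pos hc, if_pos hc']
    · have hc' : ¬ KempeChain (G.comap Subtype.val) (fun u => φ u.val) a b x y :=
        fun h => hc (chain_lift h)
      unfold kempeSwap
      rw [if_neg hc, if_neg hc']
  · unfold kempeSwap
    rw [if_neg (fun h => hv v h rfl)]

lemma restrict_col {φ : V → ℕ} (hφ : IsLColoring G L φ) :
    IsLColoring (G.comap Subtype.val) (fun u : {u : V // u ≠ v} => L u.val)
      (fun u => φ u.val) :=
  ⟨fun u => hφ.1 u.val, fun _ _ hadj => hφ.2 hadj⟩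

lemma lift_easy {φ : V → ℕ} (hφ : IsLColoring G L φ) {a b : ℕ} {x : {u : V // u ≠ v}}
    (hab : a ≠ b) (hx : φ x.val = a ∨ φ x.val = b)
    (hτ : IsLColoring (G.comap Subtype.val) (fun u : {u : V // u ≠ v} => L u.val)
      (kempeSwap (G.comap Subtype.val) (fun u => φ u.val) a b x))
    (hgood : (φ v ≠ a ∧ φ v ≠ b) ∨ (∀ u, G.Adj u v → φ u ≠ a ∧ φ u ≠ b)) :
    KempeStep G L φ (kempeSwap G φ a b x.val) ∧
    ∀ y : {u : V // u ≠ v}, kempeSwap G φ a b x.val y.val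
      = kempeSwap (G.comap Subtype.val) (fun u => φ u.val) a b x y := by
  have hv : ∀ y, KempeChain G φ a b x.val y → y ≠ v := by
    rcases hgood with h | h
    · exact not_chain_of_color h.1 h.2
    · exact not_chain_of_nbr h
  obtain ⟨hres, hvval⟩ := swap_restrict (x := x) (φ := φ) (a := a) (b := b) hv
  have hnecol : ∀ u, G.Adj u v → kempeSwap G φ a b x.val u ≠ φ v := by
    intro u hadj h
    rcases hgood with hg | hg
    · rcases swap_mem (G := G) (φ := φ) (a := a) (b := b) (x := x.val) (w := u) with h' | h' | h'
      · exact hφ.2 hadj (h' ▸ h)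
      · exact hg.1 (h.symm.trans h')
      · exact hg.2 (h.symm.trans h')
    · have h' := swap_apply_of_ne (G := G) (x := x.val) (hg u hadj).1 (hg u hadj).2
      exact hφ.2 hadj (h' ▸ h)
  have hcol : IsLColoring G L (kempeSwap G φ a b x.val) := by
    constructor
    · intro u
      by_cases hu : u = v
      · rw [hu, hvval]; exact hφ.1 v
      · rw [hres ⟨u, hu⟩]; exact hτ.1 ⟨u, hu⟩
    · intro u w hadj
      by_cases hu : u = v <;> by_cases hw : w = v
      · rw [hu, hw] at hadj; exact absurd hadj (G.irrefl)
      · rw [hu] at hadj ⊢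
        rw [hvval]
        exact fun h => hnecol w hadj.symm h.symm
      · rw [hw] at hadj ⊢
        rw [hvval]
        exact hnecol u hadj
      · rw [hres ⟨u, hu⟩, hres ⟨w, hw⟩]
        exact hτ.2 (by exact hadj)
  exact ⟨⟨a, b, x.val, hab, hx, rfl, hcol⟩, hres⟩

lemma lift_hard {φ : V → ℕ} (hφ : IsLColoring G L φ) {a b : ℕ} (hab : a ≠ b)
    {x : {u : V // u ≠ v}} (hva : φ v = a) (hx : φ x.val = a ∨ φ x.val = b)
    (hτ : IsLColoring (G.comap Subtype.val) (fun u : {u : V // u ≠ v} => L u.val)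
      (kempeSwap (G.comap Subtype.val) (fun u => φ u.val) a b x))
    (ha : a ∈ L v) (hb : b ∈ L v)
    {u0 : V} (hu0adj : G.Adj u0 v) (hu0b : φ u0 = b)
    (huniq : ∀ u, G.Adj u v → φ u = b → u = u0) :
    KempeStep G L φ (kempeSwap G φ a b x.val) ∧
    ∀ y : {u : V // u ≠ v}, kempeSwap G φ a b x.val y.val
      = kempeSwap (G.comap Subtype.val) (fun u => φ u.val) a b x y := by
  set G' := G.comap (Subtype.val : {u : V // u ≠ v} → V) with hG'
  set φ' : {u : V // u ≠ v} → ℕ := fun u => φ u.val with hφ'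
  have hu0v : u0 ≠ v := hu0adj.ne
  set u0' : {u : V // u ≠ v} := ⟨u0, hu0v⟩ with hu0'
  have hnbra : ∀ u, G.Adj u v → φ u ≠ a := fun u hadj h =>
    hφ.2 hadj (h.trans hva.symm)
  -- key : descend chains from G to G' sending v to u0
  have key : ∀ y, KempeChain G φ a b x.val y →
      (∀ hy : y ≠ v, KempeChain G' φ' a b x ⟨y, hy⟩) ∧
      (y = v → KempeChain G' φ' a b x u0') := by
    intro y h
    induction h with
    | refl =>
      refine ⟨fun hy => ?_, fun e => absurd e x.2⟩
      have : (⟨x.val, hy⟩ : {u : V // u ≠ v}) = x := Subtype.ext rfl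
      rw [this]
      exact Relation.ReflTransGen.refl
    | @tail y' y h₁ h₂ ih =>
      obtain ⟨hadj, hcy', hcy⟩ := h₂
      constructor
      · intro hy
        by_cases hy' : y' = v
        · rw [hy'] at hadj
          have hyb : φ y = b := by
            rcases hcy with h' | h'
            · exact absurd h' (hnbra y hadj.symm)
            · exact h'
          have hyu0 : y = u0 := huniq y hadj.symm hyb
          have : (⟨y, hy⟩ : {u : V // u ≠ v}) = u0' := Subtype.ext hyu0
          rw [this]
          exact ih.2 hy'
        · exact (ih.1 hy').tail ⟨hadj, hcy', hcy⟩
      · intro e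
        rw [e] at hadj
        have hy'v : y' ≠ v := fun e' => by rw [e'] at hadj; exact G.irrefl hadj
        have hy'b : φ y' = b := by
          rcases hcy' with h' | h'
          · exact absurd h' (hnbra y' hadj)
          · exact h'
        have : (⟨y', hy'v⟩ : {u : V // u ≠ v}) = u0' := Subtype.ext (huniq y' hadj hy'b)
        have h' := ih.1 hy'v
        rw [this] at h'
        exact h'
  have chain_iff : ∀ y : {u : V // u ≠ v},
      KempeChain G φ a b x.val y.val ↔ KempeChain G' φ' a b x y := by
    intro y
    constructor
    · intro h
      have := (key y.val h).1 y.2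
      simpa using this
    · exact chain_lift
  have chain_v_iff : KempeChain G φ a b x.val v ↔ KempeChain G φ a b x.val u0 := by
    constructor
    · intro h
      exact chain_lift ((key v h).2 rfl)
    · intro h
      exact h.tail ⟨hu0adj, Or.inr hu0b, Or.inl hva⟩
  have hres : ∀ y : {u : V // u ≠ v}, kempeSwap G φ a b x.val y.val
      = kempeSwap G' φ' a b x y := by
    intro y
    unfold kempeSwap
    by_cases hc : KempeChain G φ a b x.val y.val
    · rw [if_pos hc, if_pos ((chain_iff y).mp hc)]
    · rw [if_neg hc, if_neg (fun h => hc ((chain_iff y).mpr h))]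
  have hba : b ≠ a := hab.symm
  have hvv : kempeSwap G φ a b x.val v
      = if KempeChain G φ a b x.val v then b else a := by
    unfold kempeSwap
    by_cases hc : KempeChain G φ a b x.val v
    · rw [if_pos hc, if_pos hc, if_pos hva]
    · rw [if_neg hc, if_neg hc, hva]
  have hvu0 : kempeSwap G φ a b x.val u0
      = if KempeChain G φ a b x.val v then a else b := by
    unfold kempeSwap
    by_cases hc : KempeChain G φ a b x.val v
    · rw [if_pos (chain_v_iff.mp hc), if_pos hc, if_neg (hu0b ▸ hba), if_pos hu0b]
    · rw [if_neg (fun h => hc (chain_v_iff.mpr h)), if_neg hc, hu0b]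
  have hnecol : ∀ u, G.Adj u v → kempeSwap G φ a b x.val u ≠ kempeSwap G φ a b x.val v := by
    intro u hadj
    by_cases hu : u = u0
    · rw [hu, hvu0, hvv]
      by_cases hc : KempeChain G φ a b x.val v
      · rw [if_pos hc, if_pos hc]; exact hab
      · rw [if_neg hc, if_neg hc]; exact hba
    · have hunb : φ u ≠ b := fun h => hu (huniq u hadj h)
      rw [swap_apply_of_ne (hnbra u hadj) hunb, hvv]
      by_cases hc : KempeChain G φ a b x.val v
      · rw [if_pos hc]; exact hunb
      · rw [if_neg hc]; exact hnbra u hadj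
  have hcol : IsLColoring G L (kempeSwap G φ a b x.val) := by
    constructor
    · intro u
      by_cases hu : u = v
      · rw [hu, hvv]
        by_cases hc : KempeChain G φ a b x.val v
        · rw [if_pos hc]; exact hb
        · rw [if_neg hc]; exact ha
      · rw [hres ⟨u, hu⟩]; exact hτ.1 ⟨u, hu⟩
    · intro u w hadj
      by_cases hu : u = v <;> by_cases hw : w = v
      · rw [hu, hw] at hadj; exact absurd hadj (G.irrefl)
      · rw [hu] at hadj ⊢
        exact fun h => hnecol w hadj.symm h.symm
      · rw [hw] at hadj ⊢
        exact hnecol u hadj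
      · rw [hres ⟨u, hu⟩, hres ⟨w, hw⟩]
        exact hτ.2 (by exact hadj)
  exact ⟨⟨a, b, x.val, hab, hx, rfl, hcol⟩, hres⟩

lemma step_col {φ ψ : V → ℕ} (h : KempeStep G L φ ψ) : IsLColoring G L ψ := by
  obtain ⟨_, _, _, _, _, _, h⟩ := h
  exact h

lemma lift_step_core [Fintype V]
    (hdeg : (Finset.univ.filter (fun u => G.Adj u v)).card < (L v).card)
    {φ : V → ℕ} (hφ : IsLColoring G L φ) {a b : ℕ} (hab : a ≠ b)
    {x : {u : V // u ≠ v}} (hva : φ v = a) (hx : φ x.val = a ∨ φ x.val = b)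
    (hτ : IsLColoring (G.comap Subtype.val) (fun u : {u : V // u ≠ v} => L u.val)
      (kempeSwap (G.comap Subtype.val) (fun u => φ u.val) a b x)) :
    ∃ τ, IsLColoring G L τ ∧
      (∀ y : {u : V // u ≠ v}, τ y.val
        = kempeSwap (G.comap Subtype.val) (fun u => φ u.val) a b x y) ∧
      LEquiv G L φ τ := by
  classical
  have hnbra : ∀ u, G.Adj u v → φ u ≠ a := fun u hu hc => hφ.2 hu (hc.trans hva.symm)
  by_cases hbn : ∀ u, G.Adj u v → φ u ≠ b
  · obtain ⟨hstep, hres⟩ := lift_easy hφ hab hx hτ (Or.inr fun u hu => ⟨hnbra u hu, hbn u hu⟩)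
    exact ⟨_, step_col hstep, hres, Relation.ReflTransGen.single hstep⟩
  push_neg at hbn
  set N : Finset V := Finset.univ.filter (fun u => G.Adj u v) with hN
  set nc : Finset ℕ := N.image φ with hnc
  have hmemN : ∀ u, G.Adj u v → u ∈ N := fun u hu =>
    Finset.mem_filter.mpr ⟨Finset.mem_univ u, hu⟩
  by_cases hex : ∃ c ∈ L v, c ∉ nc ∧ c ≠ a ∧ c ≠ b
  · obtain ⟨c, hcL, hcn, hca, hcb⟩ := hex
    have hnbrc : ∀ u, G.Adj u v → φ u ≠ c := fun u hu hc =>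
      hcn (Finset.mem_image.mpr ⟨u, hmemN u hu, hc⟩)
    obtain ⟨hstep1, hcol2⟩ := recolor_step hφ hcL (by rw [hva]; exact hca) hnbrc
    set φ2 : V → ℕ := Function.update φ v c with hφ2
    have hres2 : (fun u : {u : V // u ≠ v} => φ2 u.val) = (fun u => φ u.val) :=
      funext fun u => Function.update_of_ne u.2 _ _
    have hx2 : φ2 x.val = a ∨ φ2 x.val = b := by
      rw [show φ2 x.val = φ x.val from Function.update_of_ne x.2 _ _]
      exact hx
    have hτ2 : IsLColoring (G.comap Subtype.val) (fun u : {u : V // u ≠ v} => L u.val)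
        (kempeSwap (G.comap Subtype.val) (fun u => φ2 u.val) a b x) := by
      rw [hres2]
      exact hτ
    have hgood : φ2 v ≠ a ∧ φ2 v ≠ b := by
      rw [hφ2, Function.update_self]
      exact ⟨hca, hcb⟩
    obtain ⟨hstep2, hres⟩ := lift_easy hcol2 hab hx2 hτ2 (Or.inl hgood)
    refine ⟨_, step_col hstep2, fun y => ?_,
      Relation.ReflTransGen.tail (Relation.ReflTransGen.single hstep1) hstep2⟩
    rw [hres y, hres2]
  · have hnc_card : nc.card ≤ N.card := Finset.card_image_le
    have hdiff : ∃ c ∈ L v, c ∉ nc := by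
      by_contra hcon
      push_neg at hcon
      have : (L v).card ≤ nc.card := Finset.card_le_card fun c hc => hcon c hc
      omega
    push_neg at hex
    obtain ⟨c0, hc0L, hc0n⟩ := hdiff
    have hbnc : b ∈ nc := by
      obtain ⟨u1, hu1, hub⟩ := hbn
      exact Finset.mem_image.mpr ⟨u1, hmemN u1 hu1, hub⟩
    have hc0a : c0 = a := by
      by_contra hc0a
      exact hc0n ((hex c0 hc0L hc0n hc0a) ▸ hbnc)
    have haL : a ∈ L v := hc0a ▸ hc0L
    have hsub : (L v).erase a ⊆ nc := by
      intro c hc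
      by_contra hcn
      have hcL := Finset.mem_of_mem_erase hc
      have hca := Finset.ne_of_mem_erase hc
      exact hcn ((hex c hcL hcn hca) ▸ hbnc)
    have herase : ((L v).erase a).card = (L v).card - 1 := Finset.card_erase_of_mem haL
    have hcards : nc = (L v).erase a := by
      refine (Finset.eq_of_subset_of_card_le hsub ?_).symm
      omega
    have hbL : b ∈ L v := Finset.mem_of_mem_erase (hcards ▸ hbnc)
    have hNcard : (N.image φ).card = N.card := by
      have h1 : nc.card = (L v).card - 1 := by rw [hcards, herase]
      have : (L v).card - 1 ≤ N.card := by omega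
      have h2 : N.card ≤ (L v).card - 1 := by omega
      rw [← hnc]
      omega
    have hinj : Set.InjOn φ ↑N := Finset.card_image_iff.mp hNcard
    obtain ⟨u0, hu0adj, hu0b⟩ := hbn
    have huniq : ∀ u, G.Adj u v → φ u = b → u = u0 := fun u hu hub =>
      hinj (Finset.mem_coe.mpr (hmemN u hu)) (Finset.mem_coe.mpr (hmemN u0 hu0adj))
        (hub.trans hu0b.symm)
    obtain ⟨hstep, hres⟩ := lift_hard hφ hab hva hx hτ haL hbL hu0adj hu0b huniq
    exact ⟨_, step_col hstep, hres, Relation.ReflTransGen.single hstep⟩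

lemma lift_step [Fintype V]
    (hdeg : (Finset.univ.filter (fun u => G.Adj u v)).card < (L v).card)
    {φ : V → ℕ} (hφ : IsLColoring G L φ) {τ' : {u : V // u ≠ v} → ℕ}
    (hstep : KempeStep (G.comap Subtype.val) (fun u : {u : V // u ≠ v} => L u.val)
      (fun u => φ u.val) τ') :
    ∃ τ, IsLColoring G L τ ∧ (fun u : {u : V // u ≠ v} => τ u.val) = τ' ∧ LEquiv G L φ τ := by
  obtain ⟨a, b, x, hab, hx, hdef, hcol'⟩ := hstep
  by_cases hva : φ v = a
  · obtain ⟨τ, h1, h2, h3⟩ := lift_step_core hdeg hφ hab hva hx (hdef ▸ hcol')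
    exact ⟨τ, h1, funext fun y => by rw [hdef]; exact h2 y, h3⟩
  by_cases hvb : φ v = b
  · have hdef' : τ' = kempeSwap (G.comap Subtype.val) (fun u => φ u.val) b a x :=
      hdef.trans (swap_comm _ _ hab x)
    obtain ⟨τ, h1, h2, h3⟩ := lift_step_core hdeg hφ hab.symm hvb (Or.symm hx) (hdef' ▸ hcol')
    exact ⟨τ, h1, funext fun y => by rw [hdef']; exact h2 y, h3⟩
  · obtain ⟨hstepG, hres⟩ := lift_easy hφ hab hx (hdef ▸ hcol') (Or.inl ⟨hva, hvb⟩)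
    exact ⟨_, step_col hstepG, funext fun y => by rw [hdef]; exact hres y,
      Relation.ReflTransGen.single hstepG⟩

lemma lift_seq [Fintype V]
    (hdeg : (Finset.univ.filter (fun u => G.Adj u v)).card < (L v).card)
    {φ : V → ℕ} (hφ : IsLColoring G L φ) {ψ' : {u : V // u ≠ v} → ℕ}
    (h : LEquiv (G.comap Subtype.val) (fun u : {u : V // u ≠ v} => L u.val)
      (fun u => φ u.val) ψ') :
    ∃ τ, IsLColoring G L τ ∧ (fun u : {u : V // u ≠ v} => τ u.val) = ψ' ∧ LEquiv G L φ τ := by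
  induction h with
  | refl => exact ⟨φ, hφ, rfl, Relation.ReflTransGen.refl⟩
  | tail h₁ h₂ ih =>
    obtain ⟨τ, hτcol, hτres, hτeq⟩ := ih
    rw [← hτres] at h₂
    obtain ⟨τ2, h1, h2, h3⟩ := lift_step hdeg hτcol h₂
    exact ⟨τ2, h1, h2, hτeq.trans h3⟩

lemma fix_last {φ ψ : V → ℕ} (hφ : IsLColoring G L φ) (hψ : IsLColoring G L ψ)
    (hres : ∀ u, u ≠ v → φ u = ψ u) : LEquiv G L φ ψ := by
  by_cases hv : φ v = ψ v
  · have : φ = ψ := funext fun u => by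
      by_cases h : u = v
      · rw [h]; exact hv
      · exact hres u h
    rw [this]
    exact Relation.ReflTransGen.refl
  · have hnbr : ∀ u, G.Adj u v → φ u ≠ ψ v := fun u hu hc =>
      hψ.2 hu (by rw [← hres u hu.ne]; exact hc)
    obtain ⟨hstep, _⟩ := recolor_step hφ (hψ.1 v) (Ne.symm hv) hnbr
    have hupd : Function.update φ v (ψ v) = ψ := funext fun u => by
      by_cases h : u = v
      · rw [h, Function.update_self]
      · rw [Function.update_of_ne h]; exact hres u h
    exact Relation.ReflTransGen.single (hupd ▸ hstep)

end Restrict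

lemma exists_max [Fintype V] [Nonempty V] (r : V → V → Prop)
    (hr : IsStrictTotalOrder V r) : ∃ v, ∀ u, u ≠ v → r u v := by
  haveI := hr
  have key : ∀ s : Finset V, ∀ a ∈ s, ∃ m ∈ s, ∀ u ∈ s, u ≠ m → r u m := by
    intro s
    induction s using Finset.induction_on with
    | empty => intro a ha; exact absurd ha (Finset.notMem_empty a)
    | @insert a s ha ih =>
      intro _ _
      rcases s.eq_empty_or_nonempty with rfl | ⟨c, hc⟩
      · refine ⟨a, Finset.mem_insert_self a _, fun u hu hne => ?_⟩
        rcases Finset.mem_insert.mp hu with rfl | hu'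
        · exact absurd rfl hne
        · exact absurd hu' (Finset.notMem_empty u)
      · obtain ⟨m, hm, hmax⟩ := ih c hc
        rcases trichotomous_of r a m with h1 | h1 | h1
        · refine ⟨m, Finset.mem_insert_of_mem hm, fun u hu hne => ?_⟩
          rcases Finset.mem_insert.mp hu with rfl | hu'
          · exact h1
          · exact hmax u hu' hne
        · exact absurd (h1 ▸ hm) ha
        · refine ⟨a, Finset.mem_insert_self a _, fun u hu hne => ?_⟩
          rcases Finset.mem_insert.mp hu with rfl | hu'
          · exact absurd rfl hne
          · by_cases hum : u = m
            · rw [hum]; exact h1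
            · exact trans_of r (hmax u hu' hum) h1
  obtain ⟨m, _, hmax⟩ := key Finset.univ (Classical.arbitrary V) (Finset.mem_univ _)
  exact ⟨m, fun u hu => hmax u (Finset.mem_univ u) hu⟩

theorem aux (n : ℕ) : ∀ {V : Type u} [Fintype V] (G : SimpleGraph V) (L : V → Finset ℕ)
    (r : V → V → Prop), IsStrictTotalOrder V r →
    (∀ v, {u | G.Adj u v ∧ r u v}.ncard < (L v).card) →
    Fintype.card V ≤ n → LSwappable G L := by
  induction n with
  | zero =>
    intro V _ G L r hr h hcard φ ψ hφ hψ
    haveI : IsEmpty V := Fintype.card_eq_zero_iff.mp (Nat.le_zero.mp hcard)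
    have : φ = ψ := funext fun u => isEmptyElim u
    rw [this]
    exact Relation.ReflTransGen.refl
  | succ n ih =>
    intro V _ G L r hr h hcard φ ψ hφ hψ
    by_cases hemp : IsEmpty V
    · have : φ = ψ := funext fun u => isEmptyElim u
      rw [this]
      exact Relation.ReflTransGen.refl
    haveI : Nonempty V := not_isEmpty_iff.mp hemp
    obtain ⟨v, hmax⟩ := exists_max r hr
    have hdeg : (Finset.univ.filter (fun u => G.Adj u v)).card < (L v).card := by
      have e1 : {u | G.Adj u v} = {u | G.Adj u v ∧ r u v} := by
        ext u
        simp only [Set.mem_setOf_eq]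
        exact ⟨fun hu => ⟨hu, hmax u hu.ne⟩, fun hu => hu.1⟩
      have e2 : (Finset.univ.filter (fun u => G.Adj u v)).card = {u | G.Adj u v}.ncard := by
        rw [Set.ncard_eq_toFinset_card']
        congr 1
        ext u
        simp
      rw [e2, e1]
      exact h v
    set r' : {u : V // u ≠ v} → {u : V // u ≠ v} → Prop := fun a c => r a.val c.val with hr'def
    have hr' : IsStrictTotalOrder {u : V // u ≠ v} r' := by
      haveI := hr
      haveI htri : IsTrichotomous {u : V // u ≠ v} r' := ⟨by
        intro a c hac hca
        rcases trichotomous_of r a.val c.val with h1 | h1 | h1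
        · exact absurd h1 hac
        · exact Subtype.ext h1
        · exact absurd h1 hca⟩
      haveI hirr : IsIrrefl {u : V // u ≠ v} r' := ⟨fun a => irrefl_of r a.val⟩
      haveI htrans : IsTrans {u : V // u ≠ v} r' := ⟨fun _ _ _ h1 h2 => trans_of r h1 h2⟩
      haveI hso : IsStrictOrder {u : V // u ≠ v} r' := ⟨⟩
      exact ⟨⟩
    have h' : ∀ w : {u : V // u ≠ v},
        {u | (G.comap Subtype.val).Adj u w ∧ r' u w}.ncard < (L w.val).card := by
      intro w
      have hsub : Subtype.val '' {u | (G.comap Subtype.val).Adj u w ∧ r' u w}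
          ⊆ {u | G.Adj u w.val ∧ r u w.val} := by
        rintro _ ⟨u, hu, rfl⟩
        exact hu
      calc {u | (G.comap Subtype.val).Adj u w ∧ r' u w}.ncard
          = (Subtype.val '' {u | (G.comap Subtype.val).Adj u w ∧ r' u w}).ncard :=
            (Set.ncard_image_of_injective _ Subtype.val_injective).symm
        _ ≤ {u | G.Adj u w.val ∧ r u w.val}.ncard :=
            Set.ncard_le_ncard hsub (Set.toFinite _)
        _ < (L w.val).card := h w.val
    have hcard' : Fintype.card {u : V // u ≠ v} ≤ n := by
      have hlt : Fintype.card {u : V // u ≠ v} < Fintype.card V :=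
        Fintype.card_subtype_lt (x := v) (by simp)
      omega
    have hsw : LSwappable (G.comap Subtype.val) (fun u : {u : V // u ≠ v} => L u.val) :=
      ih (G.comap Subtype.val) _ r' hr' h' hcard'
    have hequiv' := hsw _ _ (restrict_col hφ) (restrict_col hψ)
    obtain ⟨τ, hτcol, hτres, hτeq⟩ := lift_seq hdeg hφ hequiv'
    exact hτeq.trans (fix_last hτcol hψ (v := v) fun u hu => congrFun hτres ⟨u, hu⟩)

end KempeAux


/-- **Corollary 5, first statement.** Let `G` be a connected graph and `L` a list
assignment for `G`.  If there exists a linear (strict total) order `r` on `V(G)` such that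
each vertex `v` is preceded in the order by fewer than `|L(v)|` of its neighbors,
then `G` is `L`-swappable. -/
theorem corollary5a {V : Type*} [Fintype V] (G : SimpleGraph V) (hconn : G.Connected)
    (L : V → Finset ℕ) (r : V → V → Prop) (hr : IsStrictTotalOrder V r)
    (h : ∀ v, {u | G.Adj u v ∧ r u v}.ncard < (L v).card) :
    LSwappable G L :=
  KempeAux.aux (Fintype.card V) G L r hr h le_rfl
end
end

section
/- Let G be a connected graph and L a list assignment for G. If |L(v)| ≥ d(v) for all v ∈ V(G) and there exists some vertex w with |L(w)| > d(w), then G is L-swappable. -/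
noncomputable section
open scoped Classical

namespace Corollary5Aux

variable {V : Type*}

/-- The graph obtained from `G` by deleting all edges incident to `w`. -/
def Gdel (G : SimpleGraph V) (w : V) : SimpleGraph V where
  Adj u v := G.Adj u v ∧ u ≠ w ∧ v ≠ w
  symm := ⟨fun u v h => ⟨h.1.symm, h.2.2, h.2.1⟩⟩
  loopless := ⟨fun v h => G.loopless.irrefl v h.1⟩

lemma Gdel_le (G : SimpleGraph V) (w : V) : Gdel G w ≤ G := fun _ _ h => h.1

/-- `flipc a b` interchanges the colors `a` and `b`. -/
def flipc (a b c : ℕ) : ℕ := if c = a then b else if c = b then a else c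

lemma kempeSwap_def (G : SimpleGraph V) (φ : V → ℕ) (a b : ℕ) (x y : V) :
    kempeSwap G φ a b x y = if KempeChain G φ a b x y then flipc a b (φ y) else φ y := rfl

lemma flipc_comm {a b : ℕ} (hab : a ≠ b) (c : ℕ) : flipc a b c = flipc b a c := by
  unfold flipc
  by_cases h1 : c = a <;> by_cases h2 : c = b <;> simp_all

lemma kempeChain_comm (G : SimpleGraph V) (φ : V → ℕ) (a b : ℕ) :
    KempeChain G φ a b = KempeChain G φ b a := by
  have key : ∀ a b : ℕ, ∀ x y, KempeChain G φ a b x y → KempeChain G φ b a x y := by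
    intro a b x y h
    refine Relation.ReflTransGen.mono ?_ _ _ h
    rintro u v ⟨h1, h2, h3⟩
    exact ⟨h1, h2.symm, h3.symm⟩
  funext x y
  exact propext ⟨key a b x y, key b a x y⟩

lemma kempeSwap_comm (G : SimpleGraph V) (φ : V → ℕ) {a b : ℕ} (hab : a ≠ b) (x : V) :
    kempeSwap G φ a b x = kempeSwap G φ b a x := by
  funext y
  rw [kempeSwap_def, kempeSwap_def, kempeChain_comm, flipc_comm hab]

lemma chain_colors {G : SimpleGraph V} {φ : V → ℕ} {a b : ℕ} {x y : V}
    (hx : φ x = a ∨ φ x = b) (h : KempeChain G φ a b x y) : φ y = a ∨ φ y = b := by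
  induction h with
  | refl => exact hx
  | tail _ h2 _ => exact h2.2.2

/-- If no neighbor of `x` is colored `a` or `b`, then the `(a,b)`-chain of `x` is `{x}`. -/
lemma chain_singleton {G : SimpleGraph V} {φ : V → ℕ} {a b : ℕ} {x y : V}
    (hnb : ∀ z, G.Adj x z → ¬(φ z = a ∨ φ z = b)) (h : KempeChain G φ a b x y) : y = x := by
  rcases (Relation.ReflTransGen.cases_head h) with h | ⟨c, hc, _⟩
  · exact h.symm
  · exact absurd hc.2.2 (hnb c hc.1)


/-- Recoloring a single vertex `v` to a fresh color `c` (not on any neighbor) is a valid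
Kempe step. -/
lemma recolor_step {G : SimpleGraph V} {L : V → Finset ℕ} {φ : V → ℕ} {v : V} {c : ℕ}
    (hφ : IsLColoring G L φ) (hcL : c ∈ L v) (hcv : c ≠ φ v)
    (hnb : ∀ z, G.Adj v z → φ z ≠ c) :
    KempeStep G L φ (Function.update φ v c) ∧ IsLColoring G L (Function.update φ v c) := by
  have hsingle : ∀ y, KempeChain G φ (φ v) c v y → y = v := by
    intro y hy
    refine chain_singleton ?_ hy
    intro z hz hor
    rcases hor with h | h
    · exact hφ.2 hz h.symm
    · exact hnb z hz h
  have heq : kempeSwap G φ (φ v) c v = Function.update φ v c := by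
    funext y
    by_cases hyv : y = v
    · rw [hyv, kempeSwap_def,
        if_pos (show KempeChain G φ (φ v) c v v from Relation.ReflTransGen.refl)]
      simp [flipc, Function.update_self]
    · rw [kempeSwap_def, if_neg (fun h => hyv (hsingle y h)), Function.update_of_ne hyv]
  have hcol : IsLColoring G L (Function.update φ v c) := by
    constructor
    · intro y
      by_cases hyv : y = v
      · rw [hyv, Function.update_self]; exact hcL
      · rw [Function.update_of_ne hyv]; exact hφ.1 y
    · intro u z hadj
      by_cases huv : u = v
      · have hadj' : G.Adj v z := huv ▸ hadj
        have hzv : z ≠ v := fun h => G.loopless.irrefl v (h ▸ hadj')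
        rw [huv, Function.update_self, Function.update_of_ne hzv]
        exact fun h => hnb z hadj' h.symm
      · by_cases hzv : z = v
        · have hadj' : G.Adj u v := hzv ▸ hadj
          rw [hzv, Function.update_self, Function.update_of_ne huv]
          exact hnb u hadj'.symm
        · rw [Function.update_of_ne huv, Function.update_of_ne hzv]
          exact hφ.2 hadj
  refine ⟨⟨φ v, c, v, fun h => hcv h.symm, Or.inl rfl, heq.symm, hcol⟩, hcol⟩

/-- Vertices of a Kempe chain in `Gdel G w` starting at `x ≠ w` are distinct from `w`. -/
lemma chain_ne_w {G : SimpleGraph V} {w : V} {σ : V → ℕ} {a b : ℕ} {x y : V}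
    (hxw : x ≠ w) (h : KempeChain (Gdel G w) σ a b x y) : y ≠ w := by
  induction h with
  | refl => exact hxw
  | tail _ h2 _ => exact h2.1.2.2

/-- A Kempe chain of `Gdel G w` is a Kempe chain of `G` for any coloring agreeing off `w`. -/
lemma chain_up {G : SimpleGraph V} {w : V} {σ τ : V → ℕ} {a b : ℕ} {x y : V}
    (hagree : ∀ y, y ≠ w → τ y = σ y)
    (h : KempeChain (Gdel G w) σ a b x y) : KempeChain G τ a b x y := by
  induction h with
  | refl => exact Relation.ReflTransGen.refl
  | tail _ h2 ih =>
      refine ih.tail ?_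
      obtain ⟨⟨hadj, hu, hv⟩, h3, h4⟩ := h2
      rw [← hagree _ hu] at h3
      rw [← hagree _ hv] at h4
      exact ⟨hadj, h3, h4⟩

/-- If no chain vertex can step to `w` in `G`, then the `G`-chain equals the
`Gdel G w`-chain. -/
lemma chain_down {G : SimpleGraph V} {w : V} {σ τ : V → ℕ} {a b : ℕ} {x y : V}
    (hxw : x ≠ w) (hagree : ∀ y, y ≠ w → τ y = σ y)
    (hblock : ∀ y, KempeChain (Gdel G w) σ a b x y →
      ¬(G.Adj y w ∧ (τ y = a ∨ τ y = b) ∧ (τ w = a ∨ τ w = b)))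
    (h : KempeChain G τ a b x y) : KempeChain (Gdel G w) σ a b x y := by
  induction h with
  | refl => exact Relation.ReflTransGen.refl
  | tail _ h2 ih =>
      obtain ⟨hadj, h3, h4⟩ := h2
      rename_i y' z _
      have hy'w : y' ≠ w := chain_ne_w hxw ih
      have hzw : z ≠ w := by
        intro hzw; subst hzw
        exact hblock y' ih ⟨hadj, h3, h4⟩
      refine ih.tail ?_
      rw [hagree _ hy'w] at h3
      rw [hagree _ hzw] at h4
      exact ⟨⟨hadj, hy'w, hzw⟩, h3, h4⟩

lemma flipc_a {a b : ℕ} : flipc a b a = b := by simp [flipc]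

lemma flipc_b {a b : ℕ} (hab : a ≠ b) : flipc a b b = a := by
  simp [flipc, Ne.symm hab]

lemma flipc_mem {a b c : ℕ} (h : c = a ∨ c = b) : flipc a b c = a ∨ flipc a b c = b := by
  rcases h with h | h <;> rw [h] <;> simp [flipc] <;> by_cases hab : a = b <;> simp [hab]

/-- **Easy lifting case.** If no vertex of the `Gdel`-chain has a `G`-neighbor step into `w`
(expressed by `Hα`), the Kempe step lifts directly. -/
lemma lift_easy {G : SimpleGraph V} {L : V → Finset ℕ} {w : V} {τ σ : V → ℕ} {a b : ℕ} {x : V}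
    (hab : a ≠ b) (hxw : x ≠ w) (hτ : IsLColoring G L τ)
    (hagree : ∀ y, y ≠ w → τ y = σ y)
    (hx : σ x = a ∨ σ x = b)
    (hLσ : IsLColoring (Gdel G w) L (kempeSwap (Gdel G w) σ a b x))
    (Hα : ∀ y, G.Adj w y → KempeChain (Gdel G w) σ a b x y → flipc a b (τ y) ≠ τ w) :
    KempeStep G L τ (kempeSwap G τ a b x) ∧ IsLColoring G L (kempeSwap G τ a b x) ∧
      ∀ y, y ≠ w → kempeSwap G τ a b x y = kempeSwap (Gdel G w) σ a b x y := by
  have hτx : τ x = a ∨ τ x = b := by rw [hagree x hxw]; exact hx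
  -- chains agree
  have hKC : ∀ y, KempeChain G τ a b x y ↔ KempeChain (Gdel G w) σ a b x y := by
    intro y
    constructor
    · refine chain_down hxw hagree ?_
      rintro z hz ⟨hadj, hzc, hwc⟩
      have hne : τ z ≠ τ w := hτ.2 hadj
      have : flipc a b (τ z) = τ w := by
        rcases hzc with h1 | h1 <;> rcases hwc with h2 | h2 <;>
          simp_all [flipc_a, flipc_b hab]
      exact Hα z hadj.symm hz this
    · exact chain_up hagree
  have hwK : ¬ KempeChain G τ a b x w := fun h => chain_ne_w hxw ((hKC w).mp h) rfl
  have hτw : kempeSwap G τ a b x w = τ w := by rw [kempeSwap_def, if_neg hwK]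
  have hagree2 : ∀ y, y ≠ w → kempeSwap G τ a b x y = kempeSwap (Gdel G w) σ a b x y := by
    intro y hyw
    rw [kempeSwap_def, kempeSwap_def]
    by_cases hC : KempeChain (Gdel G w) σ a b x y
    · rw [if_pos ((hKC y).mpr hC), if_pos hC, hagree y hyw]
    · rw [if_neg (fun h => hC ((hKC y).mp h)), if_neg hC, hagree y hyw]
  have hcol : IsLColoring G L (kempeSwap G τ a b x) := by
    constructor
    · intro y
      by_cases hyw : y = w
      · rw [hyw, hτw]; exact hτ.1 w
      · rw [hagree2 y hyw]; exact hLσ.1 y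
    · intro u z hadj
      by_cases huw : u = w
      · have hadj' : G.Adj w z := huw ▸ hadj
        have hzw : z ≠ w := fun h => G.loopless.irrefl w (h ▸ hadj')
        rw [huw, hτw, kempeSwap_def]
        by_cases hC : KempeChain G τ a b x z
        · rw [if_pos hC]
          exact fun h => Hα z hadj' ((hKC z).mp hC) h.symm
        · rw [if_neg hC]; exact hτ.2 hadj'
      · by_cases hzw : z = w
        · have hadj' : G.Adj u w := hzw ▸ hadj
          rw [hzw, hτw, kempeSwap_def]
          by_cases hC : KempeChain G τ a b x u
          · rw [if_pos hC]
            exact Hα u hadj'.symm ((hKC u).mp hC)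
          · rw [if_neg hC]; exact hτ.2 hadj'
        · rw [hagree2 u huw, hagree2 z hzw]
          exact hLσ.2 ⟨hadj, huw, hzw⟩
  exact ⟨⟨a, b, x, hab, hτx, rfl, hcol⟩, hcol, hagree2⟩

/-- Counting helper: if every color of `L w` except `a` occurs on a `G`-neighbor of `w`
distinct from a fixed neighbor `zz`, we contradict `|L w| > d(w)`. -/
lemma count_contra [Fintype V] {G : SimpleGraph V} {L : V → Finset ℕ} {w : V} {τ : V → ℕ}
    {a : ℕ} (hslack : (G.neighborSet w).ncard < (L w).card) (haL : a ∈ L w)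
    {zz : V} (hzz : zz ∈ G.neighborSet w) (f : ℕ → V)
    (hf : ∀ c ∈ (L w).erase a, G.Adj w (f c) ∧ τ (f c) = c ∧ f c ≠ zz) : False := by
  have hmaps : ∀ c ∈ (↑((L w).erase a) : Set ℕ), f c ∈ G.neighborSet w \ {zz} := by
    intro c hc
    obtain ⟨h1, h2, h3⟩ := hf c hc
    exact ⟨h1, h3⟩
  have hinj : Set.InjOn f ↑((L w).erase a) := by
    intro c1 h1 c2 h2 heq
    have e1 := (hf c1 h1).2.1
    have e2 := (hf c2 h2).2.1
    rw [← e1, ← e2, heq]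
  have h1 : (↑((L w).erase a) : Set ℕ).ncard ≤ (G.neighborSet w \ {zz}).ncard :=
    Set.ncard_le_ncard_of_injOn f hmaps hinj (Set.toFinite _)
  rw [Set.ncard_coe_finset, Finset.card_erase_of_mem haL] at h1
  have h2 : (G.neighborSet w \ {zz}).ncard < (G.neighborSet w).ncard :=
    Set.ncard_diff_singleton_lt_of_mem hzz (Set.toFinite _)
  have h3 : 1 ≤ (L w).card := Finset.card_pos.mpr ⟨a, haL⟩
  omega

/-- **Tight lifting case.** `τ w = a`, there is a chain vertex `y0` adjacent to `w`
colored `b`, and every color of `L w` is `a`, `b`, or appears on `N(w)`.  Then the chain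
in `G` is the `Gdel`-chain plus `w`, and the swap (which recolors `w` to `b`) is valid. -/
lemma lift_tight [Fintype V] {G : SimpleGraph V} {L : V → Finset ℕ} {w : V} {τ σ : V → ℕ}
    {a b : ℕ} {x : V}
    (hab : a ≠ b) (hxw : x ≠ w) (hτ : IsLColoring G L τ)
    (hagree : ∀ y, y ≠ w → τ y = σ y)
    (hx : σ x = a ∨ σ x = b)
    (hLσ : IsLColoring (Gdel G w) L (kempeSwap (Gdel G w) σ a b x))
    (hslack : (G.neighborSet w).ncard < (L w).card)
    (hτw : τ w = a)
    {y0 : V} (hy0adj : G.Adj w y0) (hy0C : KempeChain (Gdel G w) σ a b x y0)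
    (hy0b : τ y0 = b)
    (Htight : ∀ c ∈ L w, c = a ∨ c = b ∨ ∃ z, G.Adj w z ∧ τ z = c) :
    KempeStep G L τ (kempeSwap G τ a b x) ∧ IsLColoring G L (kempeSwap G τ a b x) ∧
      ∀ y, y ≠ w → kempeSwap G τ a b x y = kempeSwap (Gdel G w) σ a b x y := by
  have hτx : τ x = a ∨ τ x = b := by rw [hagree x hxw]; exact hx
  have haL : a ∈ L w := hτw ▸ hτ.1 w
  have hy0w : y0 ≠ w := fun h => G.loopless.irrefl w (h ▸ hy0adj)
  have hy0N : y0 ∈ G.neighborSet w := hy0adj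
  -- a witness neighbor for each color of `L w` other than `a`
  have hwit : ∀ c ∈ (L w).erase a, ∃ z, G.Adj w z ∧ τ z = c := by
    intro c hc
    have hca : c ≠ a := (Finset.mem_erase.mp hc).1
    rcases Htight c (Finset.mem_of_mem_erase hc) with h | h | h
    · exact absurd h hca
    · exact ⟨y0, hy0adj, h ▸ hy0b⟩
    · exact h
  -- b belongs to L w
  have hbL : b ∈ L w := by
    by_contra hbL
    refine count_contra (τ := τ) hslack haL hy0N
      (fun c => if hc : c ∈ (L w).erase a then Classical.choose (hwit c hc) else w) ?_
    intro c hc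
    simp only [dif_pos hc]
    obtain ⟨h1, h2⟩ := Classical.choose_spec (hwit c hc)
    refine ⟨h1, h2, ?_⟩
    intro heq
    rw [heq, hy0b] at h2
    exact hbL (h2 ▸ Finset.mem_of_mem_erase hc)
  -- y0 is the unique neighbor of w colored b
  have huniq : ∀ z, G.Adj w z → τ z = b → z = y0 := by
    intro z hzadj hzb
    by_contra hzy0
    refine count_contra (τ := τ) hslack haL (show z ∈ G.neighborSet w from hzadj)
      (fun c => if c = b then y0 else
        if hc : c ∈ (L w).erase a then Classical.choose (hwit c hc) else w) ?_
    intro c hc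
    by_cases hcb : c = b
    · simp only [if_pos hcb]
      exact ⟨hy0adj, hcb ▸ hy0b, fun h => hzy0 h.symm⟩
    · simp only [if_neg hcb, dif_pos hc]
      obtain ⟨h1, h2⟩ := Classical.choose_spec (hwit c hc)
      refine ⟨h1, h2, ?_⟩
      intro heq
      rw [heq, hzb] at h2
      exact hcb h2.symm
  -- chain characterization: the G-chain is the Gdel-chain plus w
  have hKC : ∀ y, KempeChain G τ a b x y ↔ (KempeChain (Gdel G w) σ a b x y ∨ y = w) := by
    intro y
    constructor
    · intro h
      induction h with
      | refl => exact Or.inl Relation.ReflTransGen.refl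
      | tail h1 h2 ih =>
          rename_i y' z
          obtain ⟨hadj, hcy, hcz⟩ := h2
          rcases ih with ih | ih
          · by_cases hzw : z = w
            · exact Or.inr hzw
            · have hy'w : y' ≠ w := chain_ne_w hxw ih
              refine Or.inl (ih.tail ⟨⟨hadj, hy'w, hzw⟩, ?_, ?_⟩)
              · rw [← hagree y' hy'w]; exact hcy
              · rw [← hagree z hzw]; exact hcz
          · -- step from w: must go to y0
            have hadj' : G.Adj w z := ih ▸ hadj
            rcases hcz with h | h
            · exact absurd (hτw.trans h.symm) (hτ.2 hadj')
            · exact Or.inl ((huniq z hadj' h) ▸ hy0C)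
    · rintro (h | h)
      · exact chain_up hagree h
      · rw [h]
        exact (chain_up hagree hy0C).tail ⟨hy0adj.symm, Or.inr hy0b, Or.inl hτw⟩
  have hwchain : KempeChain G τ a b x w := (hKC w).mpr (Or.inr rfl)
  have hτsw : kempeSwap G τ a b x w = b := by
    rw [kempeSwap_def, if_pos hwchain, hτw, flipc_a]
  have hagree2 : ∀ y, y ≠ w → kempeSwap G τ a b x y = kempeSwap (Gdel G w) σ a b x y := by
    intro y hyw
    rw [kempeSwap_def, kempeSwap_def]
    by_cases hC : KempeChain (Gdel G w) σ a b x y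
    · rw [if_pos ((hKC y).mpr (Or.inl hC)), if_pos hC, hagree y hyw]
    · have : ¬ KempeChain G τ a b x y := by
        intro h
        rcases (hKC y).mp h with h' | h'
        · exact hC h'
        · exact hyw h'
      rw [if_neg this, if_neg hC, hagree y hyw]
  -- key: a neighbor z ≠ w of w has swap color ≠ b
  have hnbr : ∀ z, G.Adj w z → kempeSwap G τ a b x z ≠ b := by
    intro z hadj
    have hzw : z ≠ w := fun h => G.loopless.irrefl w (h ▸ hadj)
    rw [kempeSwap_def]
    by_cases hC : KempeChain G τ a b x z
    · rw [if_pos hC]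
      have hCz : KempeChain (Gdel G w) σ a b x z := by
        rcases (hKC z).mp hC with h | h
        · exact h
        · exact absurd h hzw
      have : σ z = a ∨ σ z = b := chain_colors hx hCz
      rw [← hagree z hzw] at this
      rcases this with h | h
      · exact absurd (hτw.trans h.symm) (hτ.2 hadj)
      · rw [h, flipc_b hab]; exact hab
    · rw [if_neg hC]
      intro h
      have := (huniq z hadj h) ▸ ((hKC y0).mpr (Or.inl hy0C))
      exact hC this
  have hcol : IsLColoring G L (kempeSwap G τ a b x) := by
    constructor
    · intro y
      by_cases hyw : y = w
      · rw [hyw, hτsw]; exact hbL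
      · rw [hagree2 y hyw]; exact hLσ.1 y
    · intro u z hadj
      by_cases huw : u = w
      · have hadj' : G.Adj w z := huw ▸ hadj
        rw [huw, hτsw]
        exact fun h => hnbr z hadj' h.symm
      · by_cases hzw : z = w
        · have hadj' : G.Adj w u := (hzw ▸ hadj).symm
          rw [hzw, hτsw]
          exact hnbr u hadj'
        · rw [hagree2 u huw, hagree2 z hzw]
          exact hLσ.2 ⟨hadj, huw, hzw⟩
  exact ⟨⟨a, b, x, hab, hτx, rfl, hcol⟩, hcol, hagree2⟩

/-- Main branch of the lifting: `τ w = a` and there is a chain vertex adjacent to `w`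
colored `b`. -/
lemma lift_main [Fintype V] {G : SimpleGraph V} {L : V → Finset ℕ} {w : V} {τ σ : V → ℕ}
    {a b : ℕ} {x : V}
    (hab : a ≠ b) (hxw : x ≠ w) (hτ : IsLColoring G L τ)
    (hagree : ∀ y, y ≠ w → τ y = σ y)
    (hx : σ x = a ∨ σ x = b)
    (hLσ : IsLColoring (Gdel G w) L (kempeSwap (Gdel G w) σ a b x))
    (hslack : (G.neighborSet w).ncard < (L w).card)
    (hτw : τ w = a)
    {y0 : V} (hy0adj : G.Adj w y0) (hy0C : KempeChain (Gdel G w) σ a b x y0)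
    (hy0b : τ y0 = b) :
    ∃ τ', LEquiv G L τ τ' ∧ IsLColoring G L τ' ∧
      ∀ y, y ≠ w → τ' y = kempeSwap (Gdel G w) σ a b x y := by
  by_cases hfree : ∃ c ∈ L w, c ≠ a ∧ c ≠ b ∧ ∀ z, G.Adj w z → τ z ≠ c
  · obtain ⟨c, hcL, hca, hcb, hnb⟩ := hfree
    have hcv : c ≠ τ w := hτw ▸ hca
    obtain ⟨step1, hcol2⟩ := recolor_step hτ hcL hcv hnb
    set τ2 := Function.update τ w c with hτ2
    have hagree2 : ∀ y, y ≠ w → τ2 y = σ y := by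
      intro y hyw
      rw [hτ2, Function.update_of_ne hyw]
      exact hagree y hyw
    have hτ2w : τ2 w = c := Function.update_self w c τ
    have Hα : ∀ y, G.Adj w y → KempeChain (Gdel G w) σ a b x y →
        flipc a b (τ2 y) ≠ τ2 w := by
      intro y hadj hC
      have hyw : y ≠ w := fun h => G.loopless.irrefl w (h ▸ hadj)
      have hyc : σ y = a ∨ σ y = b := chain_colors hx hC
      rw [hτ2w, hagree2 y hyw]
      rcases flipc_mem hyc with h | h <;> rw [h]
      · exact Ne.symm hca
      · exact Ne.symm hcb
    obtain ⟨step2, hcol3, hagree3⟩ := lift_easy hab hxw hcol2 hagree2 hx hLσ Hα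
    exact ⟨kempeSwap G τ2 a b x,
      Relation.ReflTransGen.head step1 (Relation.ReflTransGen.single step2), hcol3, hagree3⟩
  · push_neg at hfree
    have Htight : ∀ c ∈ L w, c = a ∨ c = b ∨ ∃ z, G.Adj w z ∧ τ z = c := by
      intro c hc
      by_cases hca : c = a
      · exact Or.inl hca
      · by_cases hcb : c = b
        · exact Or.inr (Or.inl hcb)
        · obtain ⟨z, hz1, hz2⟩ := hfree c hc hca hcb
          exact Or.inr (Or.inr ⟨z, hz1, hz2⟩)
    obtain ⟨step, hcol, hagree'⟩ :=
      lift_tight hab hxw hτ hagree hx hLσ hslack hτw hy0adj hy0C hy0b Htight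
    exact ⟨kempeSwap G τ a b x, Relation.ReflTransGen.single step, hcol, hagree'⟩

/-- **Lifting a Kempe step across the deletion of the edges at `w`.** -/
lemma lift_step [Fintype V] {G : SimpleGraph V} {L : V → Finset ℕ} {w : V} {τ σ σ' : V → ℕ}
    (hτ : IsLColoring G L τ)
    (hslack : (G.neighborSet w).ncard < (L w).card)
    (hagree : ∀ y, y ≠ w → τ y = σ y)
    (hstep : KempeStep (Gdel G w) L σ σ') :
    ∃ τ', LEquiv G L τ τ' ∧ IsLColoring G L τ' ∧ ∀ y, y ≠ w → τ' y = σ' y := by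
  obtain ⟨a, b, x, hab, hx, rfl, hLσ⟩ := hstep
  by_cases hxw : x = w
  · -- step at the isolated vertex w : identity off w
    subst hxw
    refine ⟨τ, Relation.ReflTransGen.refl, hτ, ?_⟩
    intro y hyw
    have hnC : ¬ KempeChain (Gdel G x) σ a b x y := by
      intro h
      have hnb : ∀ z, (Gdel G x).Adj x z → ¬(σ z = a ∨ σ z = b) := by
        intro z hz _
        exact absurd rfl hz.2.1
      exact hyw (chain_singleton hnb h)
    rw [kempeSwap_def, if_neg hnC]
    exact hagree y hyw
  · by_cases Hα : ∀ y, G.Adj w y → KempeChain (Gdel G w) σ a b x y →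
        flipc a b (τ y) ≠ τ w
    · obtain ⟨step, hcol, hagree'⟩ := lift_easy hab hxw hτ hagree hx hLσ Hα
      exact ⟨kempeSwap G τ a b x, Relation.ReflTransGen.single step, hcol, hagree'⟩
    · push_neg at Hα
      obtain ⟨y0, hy0adj, hy0C, hy0f⟩ := Hα
      have hy0w : y0 ≠ w := fun h => G.loopless.irrefl w (h ▸ hy0adj)
      have hy0c : τ y0 = a ∨ τ y0 = b := by
        rw [hagree y0 hy0w]; exact chain_colors hx hy0C
      rcases hy0c with hy0a | hy0b
      · -- τ y0 = a, hence τ w = b : apply lift_main with colors swapped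
        have hτw : τ w = b := by rw [← hy0f, hy0a, flipc_a]
        have hLσ' : IsLColoring (Gdel G w) L (kempeSwap (Gdel G w) σ b a x) := by
          rw [← kempeSwap_comm (Gdel G w) σ hab x]; exact hLσ
        have hy0C' : KempeChain (Gdel G w) σ b a x y0 := by
          rw [kempeChain_comm]; exact hy0C
        obtain ⟨τ', he, hc, ha⟩ := lift_main (Ne.symm hab) hxw hτ hagree hx.symm hLσ'
          hslack hτw hy0adj hy0C' hy0a
        refine ⟨τ', he, hc, ?_⟩
        intro y hyw
        rw [ha y hyw, ← kempeSwap_comm (Gdel G w) σ hab x]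
      · have hτw : τ w = a := by rw [← hy0f, hy0b, flipc_b hab]
        exact lift_main hab hxw hτ hagree hx hLσ hslack hτw hy0adj hy0C hy0b

/-- Lifting a whole sequence of Kempe steps in `Gdel G w` to `G`. -/
lemma lift_seq [Fintype V] {G : SimpleGraph V} {L : V → Finset ℕ} {w : V}
    (hslack : (G.neighborSet w).ncard < (L w).card) {σ σ' : V → ℕ}
    (h : Relation.ReflTransGen (KempeStep (Gdel G w) L) σ σ') :
    ∀ {τ : V → ℕ}, IsLColoring G L τ → (∀ y, y ≠ w → τ y = σ y) →
      ∃ τ', LEquiv G L τ τ' ∧ IsLColoring G L τ' ∧ ∀ y, y ≠ w → τ' y = σ' y := by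
  induction h with
  | refl => intro τ hτ hagree; exact ⟨τ, Relation.ReflTransGen.refl, hτ, hagree⟩
  | tail _ h2 ih =>
      intro τ hτ hagree
      obtain ⟨τ1, he1, hc1, ha1⟩ := ih hτ hagree
      obtain ⟨τ', he2, hc2, ha2⟩ := lift_step hc1 hslack ha1 h2
      exact ⟨τ', he1.trans he2, hc2, ha2⟩

/-- Two `L`-colorings of `G` agreeing off `w` are `L`-equivalent. -/
lemma align {G : SimpleGraph V} {L : V → Finset ℕ} {w : V} {τ ψ : V → ℕ}
    (hτ : IsLColoring G L τ) (hψ : IsLColoring G L ψ)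
    (hagree : ∀ y, y ≠ w → τ y = ψ y) : LEquiv G L τ ψ := by
  by_cases h : τ w = ψ w
  · have : τ = ψ := by
      funext y
      by_cases hyw : y = w
      · rw [hyw]; exact h
      · exact hagree y hyw
    rw [this]
    exact Relation.ReflTransGen.refl
  · have hnb : ∀ z, G.Adj w z → τ z ≠ ψ w := by
      intro z hz
      have hzw : z ≠ w := fun hh => G.loopless.irrefl w (hh ▸ hz)
      rw [hagree z hzw]
      exact fun hh => hψ.2 hz hh.symm
    obtain ⟨step, _⟩ := recolor_step hτ (hψ.1 w) (fun hh => h hh.symm) hnb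
    have : Function.update τ w (ψ w) = ψ := by
      funext y
      by_cases hyw : y = w
      · rw [hyw, Function.update_self]
      · rw [Function.update_of_ne hyw]; exact hagree y hyw
    rw [← this]
    exact Relation.ReflTransGen.single step

lemma Gdel_nbr_le [Fintype V] (G : SimpleGraph V) (w v : V) :
    ((Gdel G w).neighborSet v).ncard ≤ (G.neighborSet v).ncard :=
  Set.ncard_le_ncard (fun _ h => h.1) (Set.toFinite _)

lemma Gdel_nbr_lt [Fintype V] {G : SimpleGraph V} {w u : V} (hu : G.Adj w u) :
    ((Gdel G w).neighborSet u).ncard < (G.neighborSet u).ncard := by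
  have hsub : (Gdel G w).neighborSet u ⊆ G.neighborSet u \ {w} := by
    rintro z ⟨h1, _, h3⟩
    exact ⟨h1, h3⟩
  calc ((Gdel G w).neighborSet u).ncard ≤ (G.neighborSet u \ {w}).ncard :=
        Set.ncard_le_ncard hsub (Set.toFinite _)
    _ < (G.neighborSet u).ncard :=
        Set.ncard_diff_singleton_lt_of_mem hu.symm (Set.toFinite _)

lemma Gdel_edges_lt [Fintype V] {G : SimpleGraph V} {w z : V} (hz : G.Adj w z) :
    (Gdel G w).edgeSet.ncard < G.edgeSet.ncard := by
  refine Set.ncard_lt_ncard ⟨SimpleGraph.edgeSet_mono (Gdel_le G w), ?_⟩ (Set.toFinite _)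
  intro hsub
  have h1 : s(w, z) ∈ G.edgeSet := G.mem_edgeSet.mpr hz
  have h2 : s(w, z) ∈ (Gdel G w).edgeSet := hsub h1
  exact ((Gdel G w).mem_edgeSet.mp h2).2.1 rfl

lemma walk_to_nbr {G : SimpleGraph V} {w : V} :
    ∀ {v t : V}, G.Walk v t → t = w → v ≠ w → ∃ u, G.Adj w u ∧ (Gdel G w).Reachable v u := by
  intro v t p
  induction p with
  | nil => intro ht h; exact absurd ht h
  | @cons u v' t' h p ih =>
      intro ht huw
      by_cases hv'w : v' = w
      · refine ⟨u, ?_, SimpleGraph.Reachable.refl u⟩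
        have : G.Adj u w := hv'w ▸ h
        exact this.symm
      · obtain ⟨u0, h1, h2⟩ := ih ht hv'w
        exact ⟨u0, h1, ((show (Gdel G w).Adj u v' from ⟨h, huw, hv'w⟩).reachable).trans h2⟩

lemma walk_avoid {G : SimpleGraph V} {w : V} :
    ∀ {v u0 : V}, G.Walk v u0 → ¬ G.Reachable v w → (Gdel G w).Reachable v u0 := by
  intro v u0 p
  induction p with
  | nil => intro _; exact SimpleGraph.Reachable.refl _
  | @cons u v' w' h p ih =>
      intro hn
      have huw : u ≠ w := fun hh => hn (hh ▸ SimpleGraph.Reachable.refl u)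
      have hv'w : v' ≠ w := fun hh => hn (hh ▸ h.reachable)
      have hn' : ¬ G.Reachable v' w := fun r => hn (h.reachable.trans r)
      exact ((show (Gdel G w).Adj u v' from ⟨h, huw, hv'w⟩).reachable).trans (ih hn')

lemma noedge_swappable [Fintype V] {G : SimpleGraph V} {L : V → Finset ℕ}
    (hE : ∀ u v : V, ¬ G.Adj u v) : LSwappable G L := by
  intro φ ψ hφ hψ
  have key : ∀ (n : ℕ) (φ : V → ℕ), IsLColoring G L φ →
      (Finset.univ.filter fun v => φ v ≠ ψ v).card ≤ n → LEquiv G L φ ψ := by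
    intro n
    induction n with
    | zero =>
        intro φ hφ hcard
        have hempty := Finset.card_eq_zero.mp (Nat.le_zero.mp hcard)
        have : φ = ψ := by
          funext y
          by_contra hne
          have : y ∈ Finset.univ.filter fun v => φ v ≠ ψ v :=
            Finset.mem_filter.mpr ⟨Finset.mem_univ y, hne⟩
          rw [hempty] at this
          exact absurd this (Finset.notMem_empty y)
        rw [this]
        exact Relation.ReflTransGen.refl
    | succ n ih =>
        intro φ hφ hcard
        by_cases heq : φ = ψ
        · rw [heq]; exact Relation.ReflTransGen.refl
        · obtain ⟨v, hv⟩ := Function.ne_iff.mp heq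
          obtain ⟨step, hcol2⟩ := recolor_step hφ (hψ.1 v) (Ne.symm hv)
            (fun z hz => absurd hz (hE v z))
          refine Relation.ReflTransGen.head step (ih _ hcol2 ?_)
          have hsub : (Finset.univ.filter fun y => Function.update φ v (ψ v) y ≠ ψ y) ⊆
              (Finset.univ.filter fun y => φ y ≠ ψ y).erase v := by
            intro y hy
            have hy' := (Finset.mem_filter.mp hy).2
            have hyv : y ≠ v := by
              intro hh
              rw [hh, Function.update_self] at hy'
              exact hy' rfl
            rw [Function.update_of_ne hyv] at hy'
            exact Finset.mem_erase.mpr ⟨hyv, Finset.mem_filter.mpr ⟨Finset.mem_univ y, hy'⟩⟩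
          have hvmem : v ∈ Finset.univ.filter fun y => φ y ≠ ψ y :=
            Finset.mem_filter.mpr ⟨Finset.mem_univ v, hv⟩
          have := Finset.card_le_card hsub
          rw [Finset.card_erase_of_mem hvmem] at this
          have hpos : 1 ≤ (Finset.univ.filter fun y => φ y ≠ ψ y).card :=
            Finset.card_pos.mpr ⟨v, hvmem⟩
          omega
  exact key _ φ hφ le_rfl

/-- Main induction: on the number of edges. -/
lemma main_aux {V : Type*} [Fintype V] (n : ℕ) :
    ∀ (G : SimpleGraph V) (L : V → Finset ℕ), G.edgeSet.ncard ≤ n →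
      (∀ v, (G.neighborSet v).ncard ≤ (L v).card) →
      (∀ v, ∃ u, G.Reachable v u ∧ (G.neighborSet u).ncard < (L u).card) →
      LSwappable G L := by
  induction n using Nat.strong_induction_on with
  | _ n ih =>
    intro G L hn hall hsl
    by_cases hE : ∀ u v : V, ¬ G.Adj u v
    · exact noedge_swappable hE
    · push_neg at hE
      obtain ⟨u1, u2, hadj⟩ := hE
      obtain ⟨w, hreachw, hslw⟩ := hsl u1
      -- w has a neighbor
      have hwnbr : ∃ z, G.Adj w z := by
        by_cases h : w = u1
        · exact ⟨u2, h ▸ hadj⟩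
        · obtain ⟨p⟩ := hreachw.symm
          cases p with
          | nil => exact absurd rfl h
          | cons h' _ => exact ⟨_, h'⟩
      obtain ⟨z0, hz0⟩ := hwnbr
      have hlt : (Gdel G w).edgeSet.ncard < n := lt_of_lt_of_le (Gdel_edges_lt hz0) hn
      have hall' : ∀ v, ((Gdel G w).neighborSet v).ncard ≤ (L v).card :=
        fun v => le_trans (Gdel_nbr_le G w v) (hall v)
      have hsl' : ∀ v, ∃ u, (Gdel G w).Reachable v u ∧
          ((Gdel G w).neighborSet u).ncard < (L u).card := by
        intro v
        by_cases hvw : v = w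
        · refine ⟨v, SimpleGraph.Reachable.refl v, ?_⟩
          have hNe : (Gdel G w).neighborSet v = ∅ := by
            ext z
            exact ⟨fun h => absurd hvw h.2.1, fun h => absurd h (Set.notMem_empty z)⟩
          rw [hNe, Set.ncard_empty]
          have hpos : 0 < (L w).card := Nat.lt_of_le_of_lt (Nat.zero_le _) hslw
          rw [hvw]
          exact hpos
        · by_cases hreach : G.Reachable v w
          · obtain ⟨p⟩ := hreach
            obtain ⟨u, hu1, hu2⟩ := walk_to_nbr p rfl hvw
            exact ⟨u, hu2, lt_of_lt_of_le (Gdel_nbr_lt hu1) (hall u)⟩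
          · obtain ⟨u, hu1, hu2⟩ := hsl v
            obtain ⟨p⟩ := hu1
            exact ⟨u, walk_avoid p hreach,
              lt_of_le_of_lt (Gdel_nbr_le G w u) hu2⟩
      have hswap' : LSwappable (Gdel G w) L := ih _ hlt (Gdel G w) L le_rfl hall' hsl'
      intro φ ψ hφ hψ
      have hφ' : IsLColoring (Gdel G w) L φ := ⟨hφ.1, fun u v h => hφ.2 h.1⟩
      have hψ' : IsLColoring (Gdel G w) L ψ := ⟨hψ.1, fun u v h => hψ.2 h.1⟩
      obtain ⟨τ', he, hc, ha⟩ := lift_seq hslw (hswap' φ ψ hφ' hψ') hφ (fun y _ => rfl)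
      exact he.trans (align hc hψ ha)

end Corollary5Aux

/-- **Corollary 5, second statement.** Let `G` be a connected graph and `L` a list
assignment for `G`.  If `|L(v)| ≥ d(v)` for all `v ∈ V(G)` and there exists some vertex `w`
with `|L(w)| > d(w)`, then `G` is `L`-swappable. -/
theorem corollary5b {V : Type*} [Fintype V] (G : SimpleGraph V) (hconn : G.Connected)
    (L : V → Finset ℕ)
    (hall : ∀ v, (G.neighborSet v).ncard ≤ (L v).card)
    (hex : ∃ w, (G.neighborSet w).ncard < (L w).card) :
    LSwappable G L := by
  obtain ⟨w, hw⟩ := hex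
  exact Corollary5Aux.main_aux G.edgeSet.ncard G L le_rfl hall
    (fun v => ⟨w, hconn.preconnected v w, hw⟩)
end
end
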